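/- arXiv:2311.10532 — 4 statements merged into one kernel-verified Lean document; each statement's English description precedes it below -/
import Mathlib

section
/- Let ψ : E → ℝ ∪ {−∞} be a positively homogeneous, concave, upper semicontinuous function on a finite-dimensional real vector space E, and let Ω = {φ ∈ E* : φ(x) ≥ ψ(x) for all x ∈ E} be the associated nonempty closed convex subset of the dual space E*. Then the dual cone of C_ψ equals C_Ω, i.e. (C_ψ)* = {φ ∈ E* : φ + Ω ⊆ Ω}. -/
/-!
Statement 0 (Lemma `translation` of the paper).

Let `ψ : E → ℝ ∪ {−∞}` be a positively homogeneous, concave, upper semicontinuous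
function on a finite-dimensional real vector space `E`, and let
`Ω = {φ ∈ E* : φ(x) ≥ ψ(x) for all x}` be the associated nonempty closed convex subset
of the dual space.  Then `(C_ψ)* = C_Ω`, i.e.
`{φ : ∀ x ∈ C_ψ, φ x ≥ 0} = {φ : φ + Ω ⊆ Ω}`.
-/

open scoped Topology

noncomputable section

namespace DirectionalCounting

variable {E : Type*} [NormedAddCommGroup E] [NormedSpace ℝ E]

/-- `ψ` is positively homogeneous: `ψ (t • x) = t * ψ x` for `t ≥ 0`
(with the convention `ψ 0 = 0`, which is the case `t = 0`). -/
def PosHomog (ψ : E → EReal) : Prop :=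
  ∀ t : ℝ, 0 ≤ t → ∀ x : E, ψ (t • x) = (t : EReal) * ψ x

/-- Concavity for an `EReal`-valued function. -/
def ConcaveE (ψ : E → EReal) : Prop :=
  ∀ x y : E, ∀ t : ℝ, 0 ≤ t → t ≤ 1 →
    (t : EReal) * ψ x + ((1 - t : ℝ) : EReal) * ψ y ≤ ψ (t • x + (1 - t) • y)

/-- The closed convex set `Ω ⊆ E*` associated with `ψ`. -/
def OmegaSet (ψ : E → EReal) : Set (E →L[ℝ] ℝ) :=
  {φ | ∀ x : E, ψ x ≤ ((φ x : ℝ) : EReal)}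

/-- `C_ψ`: the closure of the essential domain of definition of `ψ`. -/
def Cpsi (ψ : E → EReal) : Set E := closure {x : E | ψ x ≠ ⊥}

theorem dualCone_Cpsi_eq_translationCone
    [FiniteDimensional ℝ E]
    (ψ : E → EReal) (hhom : PosHomog ψ) (hconc : ConcaveE ψ)
    (husc : UpperSemicontinuous ψ) (hne : (OmegaSet ψ).Nonempty) :
    {φ : E →L[ℝ] ℝ | ∀ x ∈ Cpsi ψ, 0 ≤ φ x} =
      {φ : E →L[ℝ] ℝ | ∀ θ ∈ OmegaSet ψ, φ + θ ∈ OmegaSet ψ} := by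
  ext φ
  simp only [Set.mem_setOf_eq]
  constructor
  · intro hφ θ hθ x
    by_cases hx : ψ x = ⊥
    · simp [hx]
    · have h1 : 0 ≤ φ x := hφ x (subset_closure hx)
      refine (hθ x).trans ?_
      simp only [ContinuousLinearMap.add_apply]
      exact_mod_cast by linarith
  · intro hφ
    obtain ⟨θ, hθ⟩ := hne
    have key : ∀ n : ℕ, ((n : ℝ) • φ + θ) ∈ OmegaSet ψ := by
      intro n
      induction n with
      | zero => simpa using hθ
      | succ k ih =>
        have h2 := hφ _ ih
        have : ((k : ℝ) + 1) • φ + θ = φ + ((k : ℝ) • φ + θ) := by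
          rw [add_smul, one_smul]; abel
        rw [Nat.cast_succ, this]
        exact h2
    have h0 : {x : E | ψ x ≠ ⊥} ⊆ {x : E | 0 ≤ φ x} := by
      intro x hx
      simp only [Set.mem_setOf_eq] at hx ⊢
      by_contra hneg
      push_neg at hneg
      have hub : ψ x ≤ ((θ x : ℝ) : EReal) := hθ x
      have hnt : ψ x ≠ ⊤ := (hub.trans_lt (EReal.coe_lt_top _)).ne
      lift ψ x to ℝ using ⟨hnt, hx⟩ with r hr
      obtain ⟨n, hn⟩ := exists_nat_gt ((θ x - r) / (-φ x))
      have hkey := key n x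
      simp only [OmegaSet, Set.mem_setOf_eq, ContinuousLinearMap.add_apply,
        ContinuousLinearMap.smul_apply, smul_eq_mul, ← hr, EReal.coe_le_coe_iff] at hkey
      have hdiv : (θ x - r) < (n : ℝ) * (-φ x) := by
        rwa [div_lt_iff₀ (by linarith)] at hn
      linarith
    intro x hx
    exact closure_minimal h0 (isClosed_le continuous_const φ.continuous) hx

end DirectionalCounting
end
end

section
/- Let ψ : E → ℝ ∪ {−∞} be a positively homogeneous, concave, upper semicontinuous function on a finite-dimensional real vector space E, and let Ω = {φ ∈ E* : φ(x) ≥ ψ(x) for all x ∈ E}. Then the following are equivalent: (i) Ω has non-empty interior in E*; (ii) ψ(x) + ψ(−x) < 0 for every x ≠ 0 in E. Moreover, if these conditions hold, then the interior of Ω equals {φ ∈ E* : φ(x) > ψ(x) for all x ∈ E ∖ {0}}. -/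
open scoped Topology

set_option maxHeartbeats 1000000

noncomputable section

namespace DirectionalCounting

variable {E : Type*} [NormedAddCommGroup E] [NormedSpace ℝ E]

/-- In a finite-dimensional normed space, the convex hull of a nonempty compact set
is compact. -/
theorem aux_isCompact_convexHull {F : Type*} [NormedAddCommGroup F] [NormedSpace ℝ F]
    [FiniteDimensional ℝ F] {K : Set F} (hK : IsCompact K) (hne : K.Nonempty) :
    IsCompact (convexHull ℝ K) := by
  classical
  obtain ⟨k₀, hk₀⟩ := hne
  set n := Module.finrank ℝ F + 1 with hn
  have hco : IsCompact ((stdSimplex ℝ (Fin n)) ×ˢ (Set.univ.pi fun _ : Fin n => K)) :=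
    (isCompact_stdSimplex ℝ (Fin n)).prod (isCompact_univ_pi fun _ => hK)
  have hcont : Continuous fun p : (Fin n → ℝ) × (Fin n → F) => ∑ i, p.1 i • p.2 i := by
    apply continuous_finset_sum
    intro i _
    exact ((continuous_apply i).comp continuous_fst).smul
      ((continuous_apply i).comp continuous_snd)
  have himage : (fun p : (Fin n → ℝ) × (Fin n → F) => ∑ i, p.1 i • p.2 i) ''
      ((stdSimplex ℝ (Fin n)) ×ˢ (Set.univ.pi fun _ : Fin n => K)) = convexHull ℝ K := by
    apply Set.Subset.antisymm
    · rintro - ⟨⟨w, z⟩, ⟨hw, hz⟩, rfl⟩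
      have := Finset.centerMass_mem_convexHull (Finset.univ : Finset (Fin n))
        (fun i _ => hw.1 i) (by rw [hw.2]; norm_num)
        (fun i _ => hz i (Set.mem_univ i))
      rwa [Finset.centerMass_eq_of_sum_1 _ _ hw.2] at this
    · intro x hx
      obtain ⟨ι, hι, z, w, hrange, hai, hpos, hsum, hrep⟩ :=
        eq_pos_convex_span_of_mem_convexHull hx
      letI : Fintype ι := hι
      have hcard : Fintype.card ι ≤ n := by
        refine hai.card_le_finrank_succ.trans ?_
        exact Nat.add_le_add_right (Submodule.finrank_le _) 1
      obtain ⟨e⟩ : Nonempty (ι ↪ Fin n) :=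
        Function.Embedding.nonempty_of_card_le (by simpa using hcard)
      set w' : Fin n → ℝ := fun j => if h : ∃ i, e i = j then w h.choose else 0 with hw'
      set z' : Fin n → F := fun j => if h : ∃ i, e i = j then z h.choose else k₀ with hz'
      have hch : ∀ (i : ι) (h : ∃ i', e i' = e i), h.choose = i := fun i h =>
        e.injective h.choose_spec
      have hw'e : ∀ i : ι, w' (e i) = w i := by
        intro i
        have h : ∃ i', e i' = e i := ⟨i, rfl⟩
        simp only [hw', dif_pos h, hch i h]
      have hz'e : ∀ i : ι, z' (e i) = z i := by
        intro i
        have h : ∃ i', e i' = e i := ⟨i, rfl⟩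
        simp only [hz', dif_pos h, hch i h]
      have hnotin : ∀ j ∈ Finset.univ, j ∉ Finset.univ.map e → ¬∃ i, e i = j := by
        intro j _ hj ⟨i, hi⟩
        exact hj (Finset.mem_map.2 ⟨i, Finset.mem_univ i, hi⟩)
      have hsum1 : ∑ j, w' j = ∑ i, w i := by
        calc ∑ j, w' j = ∑ j ∈ Finset.univ.map e, w' j :=
              (Finset.sum_subset (Finset.subset_univ _) (fun j hj hj' => by
                simp only [hw', dif_neg (hnotin j hj hj')])).symm
          _ = ∑ i, w' (e i) := Finset.sum_map _ e w'
          _ = ∑ i, w i := Finset.sum_congr rfl fun i _ => hw'e i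
      have hsum2 : ∑ j, w' j • z' j = ∑ i, w i • z i := by
        calc ∑ j, w' j • z' j = ∑ j ∈ Finset.univ.map e, w' j • z' j :=
              (Finset.sum_subset (Finset.subset_univ _) (fun j hj hj' => by
                simp only [hw', dif_neg (hnotin j hj hj'), zero_smul])).symm
          _ = ∑ i, w' (e i) • z' (e i) := Finset.sum_map _ e fun j => w' j • z' j
          _ = ∑ i, w i • z i := Finset.sum_congr rfl fun i _ => by
              rw [hw'e i, hz'e i]
      refine ⟨(w', z'), ⟨⟨?_, ?_⟩, ?_⟩, ?_⟩
      · intro j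
        by_cases h : ∃ i, e i = j
        · simp only [hw', dif_pos h]
          exact (hpos _).le
        · simp only [hw', dif_neg h]
          exact le_rfl
      · rw [hsum1, hsum]
      · intro j _
        by_cases h : ∃ i, e i = j
        · simp only [hz', dif_pos h]
          exact (hrange ⟨h.choose, rfl⟩ : _)
        · simp only [hz', dif_neg h]
          exact hk₀
      · show ∑ j : Fin n, w' j • z' j = x
        rw [hsum2, hrep]
  rw [← himage]
  exact hco.image hcont

/-- A salient closed convex cone in a finite-dimensional space admits a continuous
linear functional which is strictly positive on its nonzero points. -/
theorem aux_cone_functional {F : Type*} [NormedAddCommGroup F] [NormedSpace ℝ F]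
    [FiniteDimensional ℝ F] {H : Set F} (hcl : IsClosed H) (hconv : Convex ℝ H)
    (hcone : ∀ t : ℝ, 0 ≤ t → ∀ z ∈ H, t • z ∈ H)
    (hsal : ∀ z ∈ H, -z ∈ H → z = 0) :
    ∃ L : F →L[ℝ] ℝ, ∀ z ∈ H, z ≠ 0 → 0 < L z := by
  classical
  rcases H.eq_empty_or_nonempty with hHe | ⟨z₀, hz₀⟩
  · exact ⟨0, fun z hz _ => absurd hz (by simp [hHe])⟩
  have h0H : (0 : F) ∈ H := by simpa using hcone 0 le_rfl z₀ hz₀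
  have hadd : ∀ a ∈ H, ∀ b ∈ H, a + b ∈ H := by
    intro a ha b hb
    have h2 : ((1 : ℝ) / 2) • a + ((1 : ℝ) / 2) • b ∈ H :=
      hconv ha hb (by norm_num) (by norm_num) (by norm_num)
    have := hcone 2 (by norm_num) _ h2
    rwa [smul_add, smul_smul, smul_smul, show (2 : ℝ) * (1 / 2) = 1 by norm_num,
      one_smul, one_smul] at this
  set K := H ∩ Metric.sphere (0 : F) 1 with hKdef
  have hKcomp : IsCompact K := (isCompact_sphere 0 1).inter_left hcl
  rcases K.eq_empty_or_nonempty with hKe | hKne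
  · -- then H = {0}
    refine ⟨0, fun z hz hz0 => ?_⟩
    exfalso
    have hz' : ‖z‖⁻¹ • z ∈ K := by
      refine ⟨hcone _ (inv_nonneg.2 (norm_nonneg z)) z hz, ?_⟩
      simp only [Metric.mem_sphere, dist_zero_right, norm_smul, norm_inv, norm_norm]
      rw [inv_mul_cancel₀ (norm_ne_zero_iff.2 hz0)]
    rw [hKe] at hz'
    exact hz'
  have hD : IsCompact (convexHull ℝ K) := aux_isCompact_convexHull hKcomp hKne
  have h0D : (0 : F) ∉ convexHull ℝ K := by
    intro h0
    obtain ⟨ι, hι, z, w, hrange, hai, hpos, hsum, hrep⟩ :=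
      eq_pos_convex_span_of_mem_convexHull h0
    letI : Fintype ι := hι
    have hne : Nonempty ι := by
      by_contra h'
      rw [not_nonempty_iff] at h'
      rw [Finset.univ_eq_empty, Finset.sum_empty] at hsum
      norm_num at hsum
    obtain ⟨i₀⟩ := hne
    have hzK : ∀ i, z i ∈ K := fun i => hrange ⟨i, rfl⟩
    have h1 : w i₀ • z i₀ ∈ H := hcone _ (hpos i₀).le _ (hzK i₀).1
    have h2 : ∑ i ∈ Finset.univ.erase i₀, w i • z i ∈ H := by
      apply Finset.sum_induction _ (· ∈ H) (fun a b ha hb => hadd a ha b hb) h0H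
      intro i _
      exact hcone _ (hpos i).le _ (hzK i).1
    have h3 : w i₀ • z i₀ + ∑ i ∈ Finset.univ.erase i₀, w i • z i = 0 :=
      (Finset.add_sum_erase _ (fun i => w i • z i) (Finset.mem_univ i₀)).trans hrep
    have h4 : -(w i₀ • z i₀) ∈ H := by
      rw [neg_eq_of_add_eq_zero_right h3]
      exact h2
    have h5 := hsal _ h1 h4
    have h6 : z i₀ = 0 := by
      rcases smul_eq_zero.1 h5 with h | h
      · exact absurd h (hpos i₀).ne'
      · exact h
    have := (hzK i₀).2
    rw [h6] at this
    simp at this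
  obtain ⟨f, u, hu0, hub⟩ :=
    geometric_hahn_banach_point_closed (convex_convexHull ℝ K) hD.isClosed h0D
  have hu : 0 < u := by simpa using hu0
  refine ⟨f, fun z hz hz0 => ?_⟩
  have hz' : ‖z‖⁻¹ • z ∈ K := by
    refine ⟨hcone _ (inv_nonneg.2 (norm_nonneg z)) z hz, ?_⟩
    simp only [Metric.mem_sphere, dist_zero_right, norm_smul, norm_inv, norm_norm]
    rw [inv_mul_cancel₀ (norm_ne_zero_iff.2 hz0)]
  have := hub _ (subset_convexHull ℝ K hz')
  rw [map_smul] at this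
  have hnorm : 0 < ‖z‖ := norm_pos_iff.2 hz0
  have : u < ‖z‖⁻¹ * f z := this
  nlinarith [mul_pos hnorm hu, mul_lt_mul_of_pos_left this hnorm,
    mul_inv_cancel₀ hnorm.ne']

theorem interior_OmegaSet
    [FiniteDimensional ℝ E]
    (ψ : E → EReal) (hhom : PosHomog ψ) (hconc : ConcaveE ψ)
    (husc : UpperSemicontinuous ψ) :
    ((interior (OmegaSet ψ)).Nonempty ↔ ∀ x : E, x ≠ 0 → ψ x + ψ (-x) < 0) ∧
    ((∀ x : E, x ≠ 0 → ψ x + ψ (-x) < 0) →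
      interior (OmegaSet ψ) =
        {φ : E →L[ℝ] ℝ | ∀ x : E, x ≠ 0 → ψ x < ((φ x : ℝ) : EReal)}) := by
  classical
  have hpsi0 : ψ 0 = 0 := by
    have := hhom 0 le_rfl 0
    rwa [zero_smul, EReal.coe_zero, EReal.zero_mul] at this
  -- ψ never takes the value ⊤
  have hnotop : ∀ x : E, ψ x ≠ ⊤ := by
    have h1 : ∀ᶠ z in 𝓝 (0 : E), ψ z < 1 := by
      apply husc 0
      rw [hpsi0]
      exact zero_lt_one
    obtain ⟨δ, hδ, hball⟩ := Metric.eventually_nhds_iff.1 h1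
    intro x hx
    by_cases hx0 : x = 0
    · rw [hx0, hpsi0] at hx
      exact absurd hx (by simp)
    have hnx : 0 < ‖x‖ := norm_pos_iff.2 hx0
    set t : ℝ := δ / (2 * ‖x‖) with ht
    have htpos : 0 < t := div_pos hδ (by positivity)
    have hdist : dist (t • x) 0 < δ := by
      rw [dist_zero_right, norm_smul, Real.norm_eq_abs, abs_of_pos htpos, ht,
        div_mul_eq_mul_div, mul_comm]
      rw [mul_comm (2 : ℝ) ‖x‖, ← div_div]
      have : ‖x‖ * δ / ‖x‖ = δ := by field_simp
      rw [this]
      linarith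
    have := hball hdist
    rw [hhom t htpos.le, hx, EReal.coe_mul_top_of_pos htpos] at this
    exact absurd this (by simp)
  -- Step A: interior points dominate ψ with a uniform margin
  have stepA : ∀ φ ∈ interior (OmegaSet ψ), ∃ δ : ℝ, 0 < δ ∧
      ∀ x : E, ψ x ≤ ((φ x - δ * ‖x‖ : ℝ) : EReal) := by
    intro φ hφ
    obtain ⟨ε, hε, hball⟩ := Metric.mem_nhds_iff.1 (mem_interior_iff_mem_nhds.1 hφ)
    refine ⟨ε / 2, by positivity, fun x => ?_⟩
    by_cases hx : x = 0
    · simp [hx, hpsi0]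
    obtain ⟨g, hg1, hgx⟩ := exists_dual_vector ℝ x (norm_ne_zero_iff.2 hx)
    have hmem : φ - (ε / 2) • g ∈ OmegaSet ψ := by
      apply hball
      rw [Metric.mem_ball, dist_eq_norm]
      have : φ - (ε / 2) • g - φ = -((ε / 2) • g) := by abel
      rw [this, norm_neg]
      refine ((norm_smul_le ((ε : ℝ) / 2) g).trans_lt ?_)
      rw [hg1, Real.norm_eq_abs, abs_of_pos (by positivity : (0:ℝ) < ε / 2)]
      linarith
    have := hmem x
    simpa [hgx, sub_eq_add_neg, mul_comm] using this
  -- (i) → (ii)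
  have forward : (interior (OmegaSet ψ)).Nonempty → ∀ x : E, x ≠ 0 → ψ x + ψ (-x) < 0 := by
    rintro ⟨φ, hφ⟩ x hx
    obtain ⟨δ, hδ, hd⟩ := stepA φ hφ
    have h1 := hd x
    have h2 := hd (-x)
    rw [map_neg, norm_neg] at h2
    calc ψ x + ψ (-x) ≤ ((φ x - δ * ‖x‖ : ℝ) : EReal) + ((-φ x - δ * ‖x‖ : ℝ) : EReal) :=
          add_le_add h1 h2
      _ = ((-(2 * δ * ‖x‖) : ℝ) : EReal) := by
          rw [← EReal.coe_add,
            show (φ x - δ * ‖x‖) + (-φ x - δ * ‖x‖) = -(2 * δ * ‖x‖) by ring]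
      _ < ((0 : ℝ) : EReal) := by
          rw [EReal.coe_lt_coe_iff]
          have : 0 < ‖x‖ := norm_pos_iff.2 hx
          nlinarith
      _ = 0 := by norm_num
  -- interior ⊆ strict set
  have int_sub : interior (OmegaSet ψ) ⊆
      {φ : E →L[ℝ] ℝ | ∀ x : E, x ≠ 0 → ψ x < ((φ x : ℝ) : EReal)} := by
    intro φ hφ x hx
    obtain ⟨δ, hδ, hd⟩ := stepA φ hφ
    refine lt_of_le_of_lt (hd x) ?_
    rw [EReal.coe_lt_coe_iff]
    have : 0 < ‖x‖ := norm_pos_iff.2 hx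
    nlinarith
  -- strict set ⊆ interior
  have sub_int : ∀ φ : E →L[ℝ] ℝ, (∀ x : E, x ≠ 0 → ψ x < ((φ x : ℝ) : EReal)) →
      φ ∈ interior (OmegaSet ψ) := by
    intro φ hφ
    -- on the unit sphere, a uniform margin
    have hmargin : ∃ ε : ℝ, 0 < ε ∧ ∀ y ∈ Metric.sphere (0 : E) 1,
        ψ y ≤ ((φ y - ε : ℝ) : EReal) := by
      have hchoice : ∀ x ∈ Metric.sphere (0 : E) 1, ∃ c c' : ℝ,
          c < c' ∧ ψ x < ((c : ℝ) : EReal) ∧ c' < φ x := by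
        intro x hxS
        have hx0 : x ≠ 0 := by
          intro h
          rw [h] at hxS
          simp at hxS
        obtain ⟨c, hc1, hc2⟩ := EReal.exists_between_coe_real (hφ x hx0)
        rw [EReal.coe_lt_coe_iff] at hc2
        exact ⟨c, (c + φ x) / 2, by linarith, hc1, by linarith⟩
      choose! c c' hcc hc1 hc2 using hchoice
      set U : E → Set E := fun x => {y | ψ y < ((c x : ℝ) : EReal)} ∩ {y | c' x < φ y}
        with hU
      have hUopen : ∀ x ∈ Metric.sphere (0 : E) 1, IsOpen (U x) := by
        intro x _
        apply IsOpen.inter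
        · exact upperSemicontinuous_iff_isOpen_preimage.1 husc _
        · exact isOpen_Ioi.preimage φ.continuous
      have hcover : Metric.sphere (0 : E) 1 ⊆ ⋃ x ∈ Metric.sphere (0 : E) 1, U x := by
        intro x hx
        exact Set.mem_biUnion hx ⟨hc1 x hx, hc2 x hx⟩
      obtain ⟨b, hbS, hbfin, hbcov⟩ :=
        (isCompact_sphere (0 : E) 1).elim_finite_subcover_image hUopen hcover
      rcases hbfin.toFinset.eq_empty_or_nonempty with hbe | hbne
      · refine ⟨1, one_pos, fun y hy => absurd (hbcov hy) ?_⟩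
        have : b = ∅ := by
          rw [← Set.Finite.coe_toFinset hbfin, hbe]; simp
        simp [this]
      · set t := hbfin.toFinset with htdef
        refine ⟨t.inf' hbne fun x => c' x - c x, ?_, ?_⟩
        · rw [Finset.lt_inf'_iff]
          intro i hi
          have hiS : i ∈ Metric.sphere (0 : E) 1 := hbS (hbfin.mem_toFinset.1 hi)
          have := hcc i hiS
          linarith
        · intro y hy
          obtain ⟨x, hxb, hyx⟩ := Set.mem_iUnion₂.1 (hbcov hy)
          have hxt : x ∈ t := hbfin.mem_toFinset.2 hxb
          have hinf : t.inf' hbne (fun x => c' x - c x) ≤ c' x - c x :=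
            Finset.inf'_le _ hxt
          obtain ⟨hy1, hy2⟩ := hyx
          have hy2' : c' x < φ y := hy2
          refine le_trans (le_of_lt hy1) ?_
          rw [EReal.coe_le_coe_iff]
          linarith
    obtain ⟨ε, hε, hsphere⟩ := hmargin
    rw [mem_interior_iff_mem_nhds, Metric.mem_nhds_iff]
    refine ⟨ε, hε, fun φ' hφ' x => ?_⟩
    rw [Metric.mem_ball, dist_eq_norm] at hφ'
    by_cases hx : x = 0
    · simp [hx, hpsi0]
    have hnx : 0 < ‖x‖ := norm_pos_iff.2 hx
    have hxhat : ‖x‖⁻¹ • x ∈ Metric.sphere (0 : E) 1 := by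
      simp only [Metric.mem_sphere, dist_zero_right, norm_smul, norm_inv, norm_norm]
      rw [inv_mul_cancel₀ hnx.ne']
    have hψx : ψ x = ((‖x‖ : ℝ) : EReal) * ψ (‖x‖⁻¹ • x) := by
      rw [← hhom ‖x‖ (norm_nonneg x), smul_smul, mul_inv_cancel₀ hnx.ne', one_smul]
    have hb1 : ψ x ≤ ((‖x‖ * (φ (‖x‖⁻¹ • x) - ε) : ℝ) : EReal) := by
      rw [hψx, EReal.coe_mul]
      exact mul_le_mul_of_nonneg_left (hsphere _ hxhat)
        (by exact_mod_cast norm_nonneg x)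
    refine le_trans hb1 ?_
    rw [EReal.coe_le_coe_iff]
    have hφsmul : φ (‖x‖⁻¹ • x) = ‖x‖⁻¹ * φ x := by rw [map_smul]; rfl
    have hdiff : |φ' x - φ x| ≤ ε * ‖x‖ := by
      have h1 : |(φ' - φ) x| ≤ ‖φ' - φ‖ * ‖x‖ := (φ' - φ).le_opNorm x
      have h2 : (φ' - φ) x = φ' x - φ x := rfl
      rw [h2] at h1
      refine h1.trans ?_
      have := norm_nonneg x
      nlinarith
    have habs := abs_le.1 hdiff
    rw [hφsmul]
    have : ‖x‖ * (‖x‖⁻¹ * φ x - ε) = φ x - ε * ‖x‖ := by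
      field_simp
    rw [this]
    linarith [habs.1]
  -- existence of a strictly dominating φ under (ii)
  have existence : (∀ x : E, x ≠ 0 → ψ x + ψ (-x) < 0) →
      ∃ φ : E →L[ℝ] ℝ, ∀ x : E, x ≠ 0 → ψ x < ((φ x : ℝ) : EReal) := by
    intro hii
    set H : Set (E × ℝ) := {z | ((z.2 : ℝ) : EReal) ≤ ψ z.1} with hHdef
    have hcl : IsClosed H := by
      rw [← isOpen_compl_iff]
      have hcompl : Hᶜ = {z : E × ℝ | ψ z.1 < ((z.2 : ℝ) : EReal)} := by
        ext z; simp [hHdef, not_le]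
      rw [hcompl]
      rw [isOpen_iff_mem_nhds]
      intro z hz
      obtain ⟨q, hq1, hq2⟩ := EReal.exists_between_coe_real hz
      rw [EReal.coe_lt_coe_iff] at hq2
      have h1 : {y : E | ψ y < ((q : ℝ) : EReal)} ∈ 𝓝 z.1 :=
        (upperSemicontinuous_iff_isOpen_preimage.1 husc q).mem_nhds hq1
      have h2 : Set.Ioi q ∈ 𝓝 z.2 := Ioi_mem_nhds hq2
      rw [nhds_prod_eq]
      refine Filter.mem_of_superset (Filter.prod_mem_prod h1 h2) ?_
      rintro ⟨y, s⟩ ⟨hy, hs⟩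
      exact lt_trans hy (EReal.coe_lt_coe_iff.2 hs)
    have hconvH : Convex ℝ H := by
      rintro z hz w hw a b ha hb hab
      have hb' : b = 1 - a := by linarith
      subst hb'
      have ha1 : a ≤ 1 := by linarith
      have key := hconc z.1 w.1 a ha ha1
      have hmul1 : ((a : ℝ) : EReal) * ((z.2 : ℝ) : EReal) ≤ ((a : ℝ) : EReal) * ψ z.1 :=
        mul_le_mul_of_nonneg_left hz (by exact_mod_cast ha)
      have hmul2 : (((1 - a : ℝ) : ℝ) : EReal) * ((w.2 : ℝ) : EReal) ≤
          (((1 - a : ℝ) : ℝ) : EReal) * ψ w.1 :=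
        mul_le_mul_of_nonneg_left hw (by exact_mod_cast (by linarith : (0:ℝ) ≤ 1 - a))
      show (((a • z + (1 - a) • w).2 : ℝ) : EReal) ≤ ψ ((a • z + (1 - a) • w).1)
      have h2 : (a • z + (1 - a) • w).2 = a * z.2 + (1 - a) * w.2 := rfl
      have h1 : (a • z + (1 - a) • w).1 = a • z.1 + (1 - a) • w.1 := rfl
      rw [h1, h2, EReal.coe_add, EReal.coe_mul, EReal.coe_mul]
      exact le_trans (add_le_add hmul1 hmul2) key
    have hconeH : ∀ t : ℝ, 0 ≤ t → ∀ z ∈ H, t • z ∈ H := by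
      intro t ht z hz
      show (((t • z).2 : ℝ) : EReal) ≤ ψ ((t • z).1)
      have h2 : (t • z).2 = t * z.2 := rfl
      have h1 : (t • z).1 = t • z.1 := rfl
      rw [h1, h2, EReal.coe_mul, hhom t ht]
      exact mul_le_mul_of_nonneg_left hz (by exact_mod_cast ht)
    have hsalH : ∀ z ∈ H, -z ∈ H → z = 0 := by
      rintro ⟨x, r⟩ hz hnz
      have hz' : ((r : ℝ) : EReal) ≤ ψ x := hz
      have hnz' : ((-r : ℝ) : EReal) ≤ ψ (-x) := hnz
      by_cases hx : x = 0
      · subst hx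
        rw [hpsi0] at hz'
        rw [neg_zero, hpsi0] at hnz'
        have h1 : r ≤ 0 := by exact_mod_cast hz'
        have h2 : -r ≤ 0 := by exact_mod_cast hnz'
        have : r = 0 := le_antisymm h1 (by linarith)
        simp [this, Prod.ext_iff]
      · exfalso
        have := hii x hx
        have hsum : ((0 : ℝ) : EReal) ≤ ψ x + ψ (-x) := by
          have := add_le_add hz' hnz'
          rwa [← EReal.coe_add, add_neg_cancel] at this
        rw [EReal.coe_zero] at hsum
        exact absurd (lt_of_le_of_lt hsum this) (lt_irrefl 0)
    obtain ⟨L, hL⟩ := aux_cone_functional hcl hconvH hconeH hsalH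
    set a : ℝ := L (0, 1) with hadef
    have hmem : ((0 : E), (-1 : ℝ)) ∈ H := by
      show (((-1 : ℝ) : ℝ) : EReal) ≤ ψ 0
      rw [hpsi0, show (0 : EReal) = ((0 : ℝ) : EReal) by simp]
      exact EReal.coe_le_coe_iff.2 (by norm_num)
    have hne : ((0 : E), (-1 : ℝ)) ≠ (0 : E × ℝ) := by
      simp [Prod.ext_iff]
    have hpos := hL _ hmem hne
    have hLneg : L ((0 : E), (-1 : ℝ)) = -a := by
      have : ((0 : E), (-1 : ℝ)) = -((0 : E), (1 : ℝ)) := by simp [Prod.ext_iff]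
      rw [this, map_neg]
    rw [hLneg] at hpos
    have ha : a < 0 := by linarith
    set φ : E →L[ℝ] ℝ := (-a)⁻¹ • (L.comp (ContinuousLinearMap.inl ℝ E ℝ)) with hφdef
    refine ⟨φ, fun x hx => ?_⟩
    have hφx : φ x = (-a)⁻¹ * L (x, 0) := by
      simp [hφdef, ContinuousLinearMap.smul_apply, ContinuousLinearMap.comp_apply,
        ContinuousLinearMap.inl_apply]
    by_cases hbot : ψ x = ⊥
    · rw [hbot]; exact EReal.bot_lt_coe _
    have hcoe : ((ψ x).toReal : EReal) = ψ x := EReal.coe_toReal (hnotop x) hbot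
    set r : ℝ := (ψ x).toReal with hrdef
    have hmemx : (x, r) ∈ H := by
      show ((r : ℝ) : EReal) ≤ ψ x
      rw [hcoe]
    have hnex : (x, r) ≠ (0 : E × ℝ) := by
      simp [Prod.ext_iff, hx]
    have hposx := hL _ hmemx hnex
    have hdecomp : L (x, r) = L (x, 0) + r * a := by
      have : ((x : E), (r : ℝ)) = (x, (0 : ℝ)) + r • ((0 : E), (1 : ℝ)) := by
        simp [Prod.ext_iff]
      rw [this, map_add, map_smul]
      simp [hadef]
    rw [hdecomp] at hposx
    have hrlt : r < φ x := by
      rw [hφx]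
      have h1 : r * (-a) < L (x, 0) := by nlinarith
      have h2 : (0 : ℝ) < -a := by linarith
      calc r = (-a)⁻¹ * (r * (-a)) := by
              field_simp
              rw [mul_div_assoc, div_self ha.ne, mul_one]
        _ < (-a)⁻¹ * L (x, 0) := by
            exact mul_lt_mul_of_pos_left h1 (inv_pos.2 h2)
    calc ψ x = ((r : ℝ) : EReal) := hcoe.symm
      _ < ((φ x : ℝ) : EReal) := EReal.coe_lt_coe_iff.2 hrlt
  constructor
  · constructor
    · exact forward
    · intro hii
      obtain ⟨φ, hφ⟩ := existence hii
      exact ⟨φ, sub_int φ hφ⟩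
  · intro hii
    apply Set.Subset.antisymm
    · exact int_sub
    · intro φ hφ
      exact sub_int φ hφ

end DirectionalCounting
end
end

section
/- Let E and F be finite-dimensional real vector spaces, T : E → F a linear map with adjoint T* : F* → E*. Let ψ : E → ℝ ∪ {−∞} be a positively homogeneous, concave, upper semicontinuous function with associated closed convex set Ω = {φ ∈ E* : φ ≥ ψ}, and assume ψ < 0 on ker T ∖ {0}. Then the set Ω' = (T*)⁻¹(Ω) ⊆ F* is non-empty, and the positively homogeneous concave upper semicontinuous function ψ' : F → ℝ ∪ {−∞} dual to Ω' is given by ψ'(y) = sup{ψ(x) : x ∈ E, Tx = y} for every y ∈ F (with sup ∅ = −∞). -/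
/-!
Statement 3 (Lemma `concavetransport` of the paper).

Let `T : E → F` be linear with adjoint `T* : F* → E*`, and let `ψ : E → ℝ ∪ {−∞}` be
positively homogeneous, concave and upper semicontinuous, with associated closed convex
set `Ω = {φ ∈ E* : φ ≥ ψ}`.  Assume `ψ < 0` on `ker T ∖ {0}`.  Then
`Ω' = (T*)⁻¹(Ω) ⊆ F*` is nonempty, and the dual function `ψ'` of `Ω'` satisfies
`ψ'(y) = sup {ψ(x) : T x = y}` for every `y ∈ F` (with `sup ∅ = −∞`).
-/

open scoped Topology

noncomputable section

namespace DirectionalCounting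

variable {E F : Type*} [NormedAddCommGroup E] [NormedSpace ℝ E]
  [NormedAddCommGroup F] [NormedSpace ℝ F]

/-- The homogeneous concave upper semicontinuous function dual to a subset
`Ω ⊆ F*`: `ψ'(y) = inf {φ(y) : φ ∈ Ω}`. -/
def psiDual (Ω : Set (F →L[ℝ] ℝ)) (y : F) : EReal :=
  sInf ((fun φ : F →L[ℝ] ℝ => ((φ y : ℝ) : EReal)) '' Ω)

/- ### Auxiliary lemmas -/


lemma psi_zero {ψ : E → EReal} (hhom : PosHomog ψ) : ψ 0 = 0 := by
  have := hhom 0 le_rfl 0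
  simpa using this

lemma ereal_cases (a : EReal) (h : a ≠ ⊤) : a = ⊥ ∨ ∃ r : ℝ, a = (r : EReal) := by
  rcases eq_or_ne a ⊥ with hb | hb
  · exact Or.inl hb
  · lift a to ℝ using ⟨h, hb⟩
    exact Or.inr ⟨a, rfl⟩

lemma psi_ne_top {ψ : E → EReal} (hhom : PosHomog ψ) (husc : UpperSemicontinuous ψ)
    (x : E) : ψ x ≠ ⊤ := by
  intro htop
  have h0 : ψ 0 = 0 := psi_zero hhom
  have h1 : ∀ᶠ z in 𝓝 (0 : E), ψ z < 1 := by
    have := upperSemicontinuousAt_iff.1 (husc 0)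
    rw [h0] at this
    exact this 1 (by norm_num)
  have hcont : Filter.Tendsto (fun t : ℝ => t • x) (𝓝[>] 0) (𝓝 (0 : E)) := by
    apply Filter.Tendsto.mono_left _ nhdsWithin_le_nhds
    have : Continuous (fun t : ℝ => t • x) := continuous_id.smul continuous_const
    simpa using this.tendsto 0
  have h2 : ∀ᶠ t in 𝓝[>] (0 : ℝ), ψ (t • x) < 1 := hcont.eventually h1
  have h3 : ∀ᶠ t in 𝓝[>] (0 : ℝ), ¬ ψ (t • x) < 1 := by
    filter_upwards [self_mem_nhdsWithin] with t ht
    rw [hhom t (le_of_lt ht) x, htop, EReal.coe_mul_top_of_pos ht]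
    simp
  rcases (h2.and h3).exists with ⟨t, ht1, ht2⟩
  exact ht2 ht1

/-- The hypograph cone of `ψ`. -/
def hypoCone (ψ : E → EReal) : Set (E × ℝ) := {p | ((p.2 : ℝ) : EReal) ≤ ψ p.1}

lemma hypoCone_smul {ψ : E → EReal} (hhom : PosHomog ψ) {t : ℝ} (ht : 0 ≤ t)
    {p : E × ℝ} (hp : p ∈ hypoCone ψ) : t • p ∈ hypoCone ψ := by
  simp only [hypoCone, Set.mem_setOf_eq] at hp ⊢
  rw [Prod.smul_fst, Prod.smul_snd, smul_eq_mul, hhom t ht, EReal.coe_mul]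
  exact mul_le_mul_of_nonneg_left hp (by exact_mod_cast ht)

lemma hypoCone_convex {ψ : E → EReal} (hconc : ConcaveE ψ) : Convex ℝ (hypoCone ψ) := by
  intro p hp q hq a b ha hb hab
  have hb' : b = 1 - a := by linarith
  subst hb'
  simp only [hypoCone, Set.mem_setOf_eq] at hp hq ⊢
  have hkey := hconc p.1 q.1 a ha (by linarith)
  refine le_trans ?_ hkey
  have h1 : (a • p + (1 - a) • q).2 = a * p.2 + (1 - a) * q.2 := rfl
  rw [h1, EReal.coe_add, EReal.coe_mul, EReal.coe_mul]
  exact add_le_add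
    (mul_le_mul_of_nonneg_left hp (by exact_mod_cast ha))
    (mul_le_mul_of_nonneg_left hq (by exact_mod_cast (by linarith : (0:ℝ) ≤ 1 - a)))

lemma hypoCone_closed {ψ : E → EReal} (husc : UpperSemicontinuous ψ) :
    IsClosed (hypoCone ψ) := by
  rw [← isOpen_compl_iff, isOpen_iff_mem_nhds]
  rintro ⟨x, r⟩ hp
  simp only [Set.mem_compl_iff, hypoCone, Set.mem_setOf_eq, not_le] at hp
  obtain ⟨c, hc1, hc2⟩ := exists_between hp
  have h1 : ∀ᶠ z in 𝓝 x, ψ z < c := husc x c hc1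
  have h2 : ∀ᶠ s in 𝓝 r, c < ((s : ℝ) : EReal) := by
    have hcc : ContinuousAt (fun s : ℝ => ((s : ℝ) : EReal)) r :=
      continuous_coe_real_ereal.continuousAt
    exact hcc.eventually (eventually_gt_nhds hc2)
  filter_upwards [h1.prod_nhds h2] with z hz
  exact not_le.2 (lt_trans hz.1 hz.2)


lemma isClosed_image_cone {P Q : Type*} [NormedAddCommGroup P] [NormedSpace ℝ P]
    [NormedAddCommGroup Q] [NormedSpace ℝ Q] [FiniteDimensional ℝ P]
    (L : P →L[ℝ] Q) {C : Set P} (hC : IsClosed C)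
    (hcone : ∀ t : ℝ, 0 ≤ t → ∀ p ∈ C, t • p ∈ C)
    (hker : ∀ p ∈ C, L p = 0 → p = 0) : IsClosed (L '' C) := by
  rw [← isSeqClosed_iff_isClosed]
  intro y z hy hz
  choose x hxC hLx using hy
  set τ : ℕ → ℝ := fun n => (1 + ‖x n‖)⁻¹ with hτ
  set u : ℕ → P := fun n => τ n • x n with hu
  have hpos : ∀ n, 0 < 1 + ‖x n‖ := fun n => by positivity
  have hτpos : ∀ n, 0 < τ n := fun n => inv_pos.2 (hpos n)
  have huC : ∀ n, u n ∈ C := fun n => hcone _ (hτpos n).le _ (hxC n)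
  have hun : ∀ n, ‖u n‖ = 1 - τ n := by
    intro n
    rw [hu, norm_smul, Real.norm_eq_abs, abs_of_pos (hτpos n), hτ]
    field_simp
    ring
  have hbdd : ∀ n, (u n, τ n) ∈ Metric.closedBall (0 : P × ℝ) 1 := by
    intro n
    rw [Metric.mem_closedBall, dist_zero_right, Prod.norm_def]
    apply max_le
    · rw [hun n]
      have h1 : τ n ≤ 1 := by
        rw [hτ]
        rw [inv_le_one_iff₀]
        right; linarith [norm_nonneg (x n)]
      linarith [hτpos n]
    · rw [Real.norm_eq_abs, abs_of_pos (hτpos n)]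
      rw [hτ, inv_le_one_iff₀]
      right; linarith [norm_nonneg (x n)]
  obtain ⟨⟨v, t⟩, -, φ, hφ, hconv⟩ :=
    tendsto_subseq_of_bounded Metric.isBounded_closedBall
      (x := fun n => (u n, τ n)) hbdd
  have hv : Filter.Tendsto (fun n => u (φ n)) Filter.atTop (𝓝 v) :=
    (continuous_fst.tendsto _).comp hconv
  have ht : Filter.Tendsto (fun n => τ (φ n)) Filter.atTop (𝓝 t) :=
    (continuous_snd.tendsto _).comp hconv
  have hvC : v ∈ C := hC.mem_of_tendsto hv (Filter.Eventually.of_forall fun n => huC (φ n))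
  have ht0 : 0 ≤ t := le_of_tendsto_of_tendsto' tendsto_const_nhds ht fun n => (hτpos (φ n)).le
  have hLu : ∀ n, L (u n) = τ n • y n := by
    intro n; rw [hu, map_smul, hLx]
  have hLv : L v = t • z := by
    have h1 : Filter.Tendsto (fun n => L (u (φ n))) Filter.atTop (𝓝 (L v)) :=
      (L.continuous.tendsto _).comp hv
    have h2 : Filter.Tendsto (fun n => τ (φ n) • y (φ n)) Filter.atTop (𝓝 (t • z)) :=
      ht.smul (hz.comp hφ.tendsto_atTop)
    have h3 : (fun n => L (u (φ n))) = fun n => τ (φ n) • y (φ n) := by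
      funext n; exact hLu (φ n)
    rw [h3] at h1
    exact tendsto_nhds_unique h1 h2
  rcases eq_or_lt_of_le ht0 with ht0' | htpos
  · exfalso
    have hv0 : v = 0 := hker v hvC (by rw [hLv, ← ht0', zero_smul])
    have hnv : Filter.Tendsto (fun n => ‖u (φ n)‖) Filter.atTop (𝓝 ‖v‖) :=
      hv.norm
    have hnv' : Filter.Tendsto (fun n => ‖u (φ n)‖) Filter.atTop (𝓝 (1 - t)) := by
      have : (fun n => ‖u (φ n)‖) = fun n => 1 - τ (φ n) := by
        funext n; exact hun (φ n)
      rw [this]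
      exact tendsto_const_nhds.sub ht
    have : ‖v‖ = 1 - t := tendsto_nhds_unique hnv hnv'
    rw [hv0, norm_zero, ← ht0'] at this
    norm_num at this
  · refine ⟨t⁻¹ • v, hcone _ (inv_pos.2 htpos).le _ hvC, ?_⟩
    rw [map_smul, hLv, smul_smul, inv_mul_cancel₀ htpos.ne', one_smul]


set_option maxHeartbeats 1000000 in
theorem psiDual_preimage_adjoint
    [FiniteDimensional ℝ E] [FiniteDimensional ℝ F]
    (T : E →L[ℝ] F) (ψ : E → EReal)
    (hhom : PosHomog ψ) (hconc : ConcaveE ψ) (husc : UpperSemicontinuous ψ)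
    (hker : ∀ x : E, T x = 0 → x ≠ 0 → ψ x < 0) :
    {φ : F →L[ℝ] ℝ | φ.comp T ∈ OmegaSet ψ}.Nonempty ∧
    ∀ y : F, psiDual {φ : F →L[ℝ] ℝ | φ.comp T ∈ OmegaSet ψ} y =
      sSup (ψ '' {x : E | T x = y}) := by
  have hψtop : ∀ x : E, ψ x ≠ ⊤ := psi_ne_top hhom husc
  have hψ0 : ψ 0 = 0 := psi_zero hhom
  have hψker : ∀ x : E, T x = 0 → ψ x ≤ 0 := by
    intro x hx
    rcases eq_or_ne x 0 with rfl | hne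
    · exact le_of_eq hψ0
    · exact (hker x hx hne).le
  set L : (E × ℝ) →L[ℝ] (F × ℝ) := T.prodMap (ContinuousLinearMap.id ℝ ℝ) with hL
  have hLapp : ∀ p : E × ℝ, L p = (T p.1, p.2) := fun p => rfl
  set C' : Set (F × ℝ) := L '' hypoCone ψ with hC'
  have hmem : ∀ (z : F) (r : ℝ), ((z, r) : F × ℝ) ∈ C' ↔
      ∃ x : E, T x = z ∧ (r : EReal) ≤ ψ x := by
    intro z r
    constructor
    · rintro ⟨⟨x, sr⟩, hp, heq⟩
      rw [hLapp] at heq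
      have h1 : T x = z := congrArg Prod.fst heq
      have h2 : sr = r := congrArg Prod.snd heq
      subst h2
      exact ⟨x, h1, hp⟩
    · rintro ⟨x, hx, hr⟩
      exact ⟨(x, r), hr, by rw [hLapp, hx]⟩
  have hC'closed : IsClosed C' := by
    apply isClosed_image_cone L (hypoCone_closed husc)
      (fun t ht p hp => hypoCone_smul hhom ht hp)
    rintro ⟨x, r⟩ hp hLp
    rw [hLapp] at hLp
    have h1 : T x = 0 := congrArg Prod.fst hLp
    have h2 : r = 0 := congrArg Prod.snd hLp
    subst h2
    have hx0 : x = 0 := by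
      by_contra hne
      have hlt := hker x h1 hne
      have hle : ((0:ℝ) : EReal) ≤ ψ x := hp
      rw [EReal.coe_zero] at hle
      exact absurd (lt_of_le_of_lt hle hlt) (lt_irrefl _)
    simp [hx0]
  have hC'cone : ∀ t : ℝ, 0 ≤ t → ∀ q ∈ C', t • q ∈ C' := by
    rintro t ht q ⟨p, hp, rfl⟩
    exact ⟨t • p, hypoCone_smul hhom ht hp, map_smul L t p⟩
  have hC'cvx : Convex ℝ C' :=
    (hypoCone_convex hconc).is_linear_image ⟨map_add L, map_smul L⟩
  have hC'00 : ((0:F), (0:ℝ)) ∈ C' :=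
    (hmem 0 0).2 ⟨0, map_zero T, by rw [hψ0]; exact le_of_eq EReal.coe_zero⟩
  have hC'0m : ((0:F), (-1:ℝ)) ∈ C' := by
    refine (hmem 0 (-1)).2 ⟨0, map_zero T, ?_⟩
    rw [hψ0, ← EReal.coe_zero, EReal.coe_le_coe_iff]
    norm_num
  have htop0 : ∀ r : ℝ, ((0:F), r) ∈ C' → r ≤ 0 := by
    intro r hr
    obtain ⟨x, hx, hrx⟩ := (hmem 0 r).1 hr
    have h1 : (r : EReal) ≤ ((0:ℝ) : EReal) := by
      rw [EReal.coe_zero]; exact le_trans hrx (hψker x hx)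
    exact EReal.coe_le_coe_iff.1 h1
  have hsep : ∀ (z : F) (c : ℝ), ((z, c) : F × ℝ) ∉ C' →
      ∃ (g : F →L[ℝ] ℝ) (β : ℝ), 0 ≤ β ∧
        (∀ (w : F) (t : ℝ), ((w, t) : F × ℝ) ∈ C' → g w + β * t ≤ 0) ∧
        0 < g z + β * c := by
    intro z c hzc
    obtain ⟨f, u, hfu, hu⟩ := geometric_hahn_banach_closed_point hC'cvx hC'closed hzc
    have h0u : 0 < u := by
      have h := hfu _ hC'00
      have h0 : ((0:F), (0:ℝ)) = (0 : F × ℝ) := rfl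
      rw [h0, map_zero] at h
      exact h
    have hle : ∀ q ∈ C', f q ≤ 0 := by
      intro q hq
      by_contra hpos
      push_neg at hpos
      have hscale := hfu ((u / f q + 1) • q) (hC'cone _ (by positivity) q hq)
      rw [map_smul, smul_eq_mul] at hscale
      have heq : (u / f q + 1) * f q = u + f q := by field_simp
      nlinarith
    have hf : ∀ (w : F) (t : ℝ), f (w, t) = f (w, 0) + t * f (0, 1) := by
      intro w t
      have hwt : ((w, t) : F × ℝ) = (w, 0) + t • ((0:F), (1:ℝ)) := by
        simp [Prod.ext_iff]
      rw [hwt, map_add, map_smul, smul_eq_mul]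
    refine ⟨f.comp (ContinuousLinearMap.inl ℝ F ℝ), f (0, 1), ?_, ?_, ?_⟩
    · have hm := hle _ hC'0m
      rw [hf 0 (-1)] at hm
      have h00 : ((0:F), (0:ℝ)) = (0 : F × ℝ) := rfl
      rw [h00, map_zero] at hm
      linarith
    · intro w t hwt
      have h := hle _ hwt
      rw [hf w t] at h
      simp only [ContinuousLinearMap.comp_apply, ContinuousLinearMap.inl_apply]
      linarith [h]
    · simp only [ContinuousLinearMap.comp_apply, ContinuousLinearMap.inl_apply]
      have h := hu
      rw [hf z c] at h
      nlinarith
  have hDchar : ∀ φ : F →L[ℝ] ℝ,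
      φ.comp T ∈ OmegaSet ψ ↔ ∀ (w : F) (t : ℝ), ((w, t) : F × ℝ) ∈ C' → t ≤ φ w := by
    intro φ
    simp only [OmegaSet, Set.mem_setOf_eq, ContinuousLinearMap.comp_apply]
    constructor
    · intro hφ w t hwt
      obtain ⟨x, hx, ht⟩ := (hmem w t).1 hwt
      have h2 := hφ x
      rw [hx] at h2
      exact EReal.coe_le_coe_iff.1 (le_trans ht h2)
    · intro h x
      rcases ereal_cases (ψ x) (hψtop x) with hb | ⟨r, hr⟩
      · rw [hb]; exact bot_le
      · have hC : ((T x, r) : F × ℝ) ∈ C' := (hmem _ _).2 ⟨x, rfl, le_of_eq hr.symm⟩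
        rw [hr]
        exact EReal.coe_le_coe_iff.2 (h _ _ hC)
  have hφβ : ∀ (g : F →L[ℝ] ℝ) (β : ℝ), 0 < β →
      (∀ (w : F) (t : ℝ), ((w, t) : F × ℝ) ∈ C' → g w + β * t ≤ 0) →
      ∀ (w : F) (t : ℝ), ((w, t) : F × ℝ) ∈ C' → t ≤ ((-β⁻¹) • g) w := by
    intro g β hβ hgle w t hwt
    have h1 := hgle w t hwt
    rw [ContinuousLinearMap.smul_apply, smul_eq_mul]
    have h2 : β⁻¹ * g w + t ≤ 0 := by
      have h3 := mul_le_mul_of_nonneg_left h1 (inv_nonneg.2 hβ.le)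
      rw [mul_zero, mul_add, ← mul_assoc, inv_mul_cancel₀ hβ.ne', one_mul] at h3
      exact h3
    linarith
  have hne : {φ : F →L[ℝ] ℝ | φ.comp T ∈ OmegaSet ψ}.Nonempty := by
    have hnot : ((0:F), (1:ℝ)) ∉ C' := fun h => by linarith [htop0 1 h]
    obtain ⟨g, β, hβ0, hgle, hgpos⟩ := hsep 0 1 hnot
    have hβ : 0 < β := by
      rw [map_zero] at hgpos; linarith
    exact ⟨(-β⁻¹) • g, (hDchar _).2 (hφβ g β hβ hgle)⟩
  refine ⟨hne, fun y => ?_⟩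
  set s := sSup (ψ '' {x : E | T x = y}) with hs
  have hge : s ≤ psiDual {φ : F →L[ℝ] ℝ | φ.comp T ∈ OmegaSet ψ} y := by
    apply le_sInf
    rintro b ⟨φ, hφ, rfl⟩
    apply sSup_le
    rintro v ⟨x, hx, rfl⟩
    have h2 := hφ x
    rw [ContinuousLinearMap.comp_apply] at h2
    rw [Set.mem_setOf_eq] at hx
    rw [← hx]
    exact h2
  have hstop : s ≠ ⊤ := by
    intro hstop
    have hmemn : ∀ n : ℕ, ((y, ((n:ℝ)+1)) : F × ℝ) ∈ C' := by
      intro n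
      have hlt : ((((n:ℝ)+1) : ℝ) : EReal) < s := by
        rw [hstop]; exact EReal.coe_lt_top _
      rw [hs, lt_sSup_iff] at hlt
      obtain ⟨v, ⟨x, hx, rfl⟩, hv⟩ := hlt
      exact (hmem _ _).2 ⟨x, hx, hv.le⟩
    have hmemn' : ∀ n : ℕ, (((((n:ℝ)+1)⁻¹ • y : F), (1:ℝ)) : F × ℝ) ∈ C' := by
      intro n
      have h1 := hC'cone (((n:ℝ)+1)⁻¹) (by positivity) _ (hmemn n)
      have h2 : ((((n:ℝ)+1)⁻¹ : ℝ) • ((y, ((n:ℝ)+1)) : F × ℝ))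
          = (((((n:ℝ)+1)⁻¹ • y : F), (1:ℝ)) : F × ℝ) := by
        rw [Prod.smul_mk, smul_eq_mul, inv_mul_cancel₀ (by positivity)]
      rwa [h2] at h1
    have hlim : Filter.Tendsto (fun n : ℕ => (((((n:ℝ)+1)⁻¹ • y : F), (1:ℝ)) : F × ℝ))
        Filter.atTop (𝓝 ((0:F), (1:ℝ))) := by
      apply Filter.Tendsto.prodMk_nhds _ tendsto_const_nhds
      have h0 : Filter.Tendsto (fun n : ℕ => ((n:ℝ)+1)⁻¹) Filter.atTop (𝓝 0) := by
        have := tendsto_one_div_add_atTop_nhds_zero_nat (𝕜 := ℝ)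
        simpa [one_div] using this
      simpa using h0.smul_const y
    have h01 : ((0:F), (1:ℝ)) ∈ C' :=
      hC'closed.mem_of_tendsto hlim (Filter.Eventually.of_forall hmemn')
    linarith [htop0 1 h01]
  have hkey : ∀ c : ℝ, s < (c : EReal) →
      psiDual {φ : F →L[ℝ] ℝ | φ.comp T ∈ OmegaSet ψ} y ≤ (c : EReal) := by
    intro c hc
    have hyc : ((y, c) : F × ℝ) ∉ C' := by
      intro h
      obtain ⟨x, hx, hcx⟩ := (hmem _ _).1 h
      have hcs : (c : EReal) ≤ s := le_trans hcx (le_sSup ⟨x, hx, rfl⟩)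
      exact absurd hc (not_lt.2 hcs)
    obtain ⟨g, β, hβ0, hgle, hgpos⟩ := hsep y c hyc
    rcases eq_or_lt_of_le hβ0 with hβ | hβ
    · obtain ⟨φ0, hφ0⟩ := hne
      have hgy : 0 < g y := by rw [← hβ] at hgpos; simpa using hgpos
      set M : ℝ := max 0 ((φ0 y - c) / g y) with hM
      have hM0 : 0 ≤ M := le_max_left _ _
      have happ : ∀ w : F, (φ0 - M • g) w = φ0 w - M * g w := by
        intro w
        simp [ContinuousLinearMap.sub_apply, ContinuousLinearMap.smul_apply, smul_eq_mul]
      have hφM : (φ0 - M • g) ∈ {φ : F →L[ℝ] ℝ | φ.comp T ∈ OmegaSet ψ} := by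
        rw [Set.mem_setOf_eq, hDchar]
        intro w t hwt
        have h1 : t ≤ φ0 w := ((hDchar φ0).1 hφ0) w t hwt
        have h2 : g w ≤ 0 := by
          have h3 := hgle w t hwt; rw [← hβ] at h3; linarith
        rw [happ]
        nlinarith
      have hval : (φ0 - M • g) y ≤ c := by
        rw [happ]
        have h4 : (φ0 y - c) / g y ≤ M := le_max_right _ _
        have h5 := (div_le_iff₀ hgy).1 h4
        linarith
      calc psiDual {φ : F →L[ℝ] ℝ | φ.comp T ∈ OmegaSet ψ} y
          ≤ (((φ0 - M • g) y : ℝ) : EReal) := sInf_le ⟨_, hφM, rfl⟩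
        _ ≤ (c : EReal) := EReal.coe_le_coe_iff.2 hval
    · have hφD : ((-β⁻¹) • g) ∈ {φ : F →L[ℝ] ℝ | φ.comp T ∈ OmegaSet ψ} := by
        rw [Set.mem_setOf_eq, hDchar]; exact hφβ g β hβ hgle
      have hval : ((-β⁻¹) • g) y ≤ c := by
        rw [ContinuousLinearMap.smul_apply, smul_eq_mul]
        have h2 : 0 < β⁻¹ * g y + c := by
          have h3 := mul_lt_mul_of_pos_left hgpos (inv_pos.2 hβ)
          rw [mul_zero, mul_add, ← mul_assoc, inv_mul_cancel₀ hβ.ne', one_mul] at h3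
          exact h3
        linarith
      calc psiDual {φ : F →L[ℝ] ℝ | φ.comp T ∈ OmegaSet ψ} y
          ≤ ((((-β⁻¹) • g) y : ℝ) : EReal) := sInf_le ⟨_, hφD, rfl⟩
        _ ≤ (c : EReal) := EReal.coe_le_coe_iff.2 hval
  have hlef : psiDual {φ : F →L[ℝ] ℝ | φ.comp T ∈ OmegaSet ψ} y ≤ s := by
    by_contra h
    push_neg at h
    obtain ⟨c, hc1, hc2⟩ := EReal.exists_between_coe_real h
    exact absurd (hkey c hc1) (not_le.2 hc2)
  exact le_antisymm hlef hge

end DirectionalCounting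
end
end

section
/- Let E be a finite-dimensional real normed vector space, F a linear subspace of E, and π : E → E/F the quotient map. Let μ be a Radon measure on E with subexponential divergence such that ψ_μ(x) = −∞ for every x ≠ 0 in F. Then the pushforward measure ν = π_*μ on E/F is finite on compact sets and has subexponential divergence, and for every y ∈ E/F one has ψ_ν(y) = sup{ψ_μ(x) : x ∈ E, π(x) = y}. -/
set_option linter.unusedSectionVars false


/-!
Statement 5 (Proposition `projection` of the paper).

Let `F` be a subspace of a finite-dimensional real normed space `E`, `π : E → E/F` the
quotient map (the quotient carrying the quotient norm).  Let `μ` be a Radon measure on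
`E` with subexponential divergence such that `ψ_μ(x) = −∞` for all `x ≠ 0` in `F`.
Then `ν = π_* μ` is finite on compact sets, has subexponential divergence, and
`ψ_ν(y) = sup {ψ_μ(x) : π(x) = y}` for every `y ∈ E/F`.
-/

open MeasureTheory Filter
open scoped Topology Classical

noncomputable section

namespace DirectionalCounting

variable {E : Type*} [SeminormedAddCommGroup E] [NormedSpace ℝ E]

/-- An open cone in `E`. -/
def IsOpenCone (C : Set E) : Prop :=
  IsOpen C ∧ ∀ x ∈ C, ∀ t : ℝ, 0 < t → t • x ∈ C

variable [MeasurableSpace E]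

/-- The exponent of growth `τ_C` of the restriction of `μ` to `C`:
the infimum of all `s` with `∫_C exp(−s‖x‖) dμ(x) < ∞`, as an extended real. -/
def coneExponent (μ : Measure E) (C : Set E) : EReal :=
  sInf ((fun s : ℝ => (s : EReal)) ''
    {s : ℝ | ∫⁻ x in C, ENNReal.ofReal (Real.exp (-s * ‖x‖)) ∂μ < ⊤})

/-- The indicator of growth `ψ_μ` of the measure `μ`. -/
def growthIndicator (μ : Measure E) (x : E) : EReal :=
  if x = 0 then 0
  else (‖x‖ : EReal) * sInf (coneExponent μ '' {C : Set E | IsOpenCone C ∧ x ∈ C})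

/-- `μ` has subexponential divergence. -/
def SubexpDiv (μ : Measure E) : Prop :=
  ∃ s : ℝ, ∫⁻ x, ENNReal.ofReal (Real.exp (-s * ‖x‖)) ∂μ < ⊤

/-! EReal helpers -/

theorem ereal_mul_le_mul_left {r : ℝ} (hr : 0 < r) {a b : EReal} (h : a ≤ b) :
    (r : EReal) * a ≤ (r : EReal) * b := by
  induction a with
  | bot => simp [EReal.coe_mul_bot_of_pos hr]
  | coe a =>
    induction b with
    | bot => exact absurd h (by simp)
    | coe b =>
      rw [← EReal.coe_mul, ← EReal.coe_mul, EReal.coe_le_coe_iff]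
      exact mul_le_mul_of_nonneg_left (EReal.coe_le_coe_iff.1 h) hr.le
    | top => simp [EReal.coe_mul_top_of_pos hr]
  | top => rw [top_le_iff.1 h]

theorem ereal_bot_of_mul_bot {r : ℝ} (hr : 0 < r) {a : EReal}
    (h : (r : EReal) * a = ⊥) : a = ⊥ := by
  induction a with
  | bot => rfl
  | coe a => rw [← EReal.coe_mul] at h; exact absurd h (EReal.coe_ne_bot _)
  | top => rw [EReal.coe_mul_top_of_pos hr] at h; exact absurd h (by simp)

theorem ereal_le_mul_of_forall {r : ℝ} (hr : 0 < r) {a b : EReal}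
    (h : ∀ s : ℝ, b < (s : EReal) → a ≤ (r : EReal) * (s : EReal)) :
    a ≤ (r : EReal) * b := by
  induction b with
  | bot =>
    rw [EReal.coe_mul_bot_of_pos hr]
    by_contra hab
    replace hab : (⊥ : EReal) < a := not_le.1 hab
    obtain ⟨c, -, hc2⟩ := EReal.exists_between_coe_real hab
    have h1 : a ≤ (((c - 1) : ℝ) : EReal) := by
      have := h ((c - 1) / r) (EReal.bot_lt_coe _)
      rwa [← EReal.coe_mul, (by field_simp : r * ((c - 1) / r) = c - 1)] at this
    have h2 : (((c - 1 : ℝ)) : EReal) < (c : EReal) := EReal.coe_lt_coe_iff.2 (by linarith)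
    exact absurd (h1.trans_lt (h2.trans hc2)) (lt_irrefl _)
  | coe b =>
    by_contra hab
    push_neg at hab
    obtain ⟨w, hw1, hw2⟩ := EReal.exists_between_coe_real hab
    have hs : (b : EReal) < ((w / r : ℝ) : EReal) := by
      rw [EReal.coe_lt_coe_iff]
      rw [← EReal.coe_mul, EReal.coe_lt_coe_iff] at hw1
      exact (lt_div_iff₀' hr).2 hw1
    have := h _ hs
    rw [← EReal.coe_mul] at this
    have hrw : r * (w / r) = w := by field_simp
    rw [hrw] at this
    exact absurd (this.trans_lt hw2) (lt_irrefl _)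
  | top => rw [EReal.coe_mul_top_of_pos hr]; exact le_top

theorem ereal_le_of_forall_mul {r : ℝ} (hr : 0 < r) {a b : EReal}
    (h : ∀ s : ℝ, b < (r : EReal) * (s : EReal) → a ≤ (r : EReal) * (s : EReal)) :
    a ≤ b := by
  rcases eq_top_or_lt_top b with hb | hb
  · rw [hb]; exact le_top
  · by_contra hab
    push_neg at hab
    obtain ⟨q, hq1, hq2⟩ := EReal.exists_between_coe_real hab
    have hq : (q : EReal) = (r : EReal) * ((q / r : ℝ) : EReal) := by
      rw [← EReal.coe_mul]
      norm_cast
      field_simp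
    rw [hq] at hq1 hq2
    exact absurd ((h _ hq1).trans_lt hq2) (lt_irrefl _)

theorem ereal_lt_div_of_mul_lt {r : ℝ} (hr : 0 < r) {x : EReal} {q : ℝ}
    (h : (r : EReal) * x < (q : EReal)) : x < ((q / r : ℝ) : EReal) := by
  induction x with
  | bot => exact EReal.bot_lt_coe _
  | coe x =>
    rw [← EReal.coe_mul, EReal.coe_lt_coe_iff] at h
    exact EReal.coe_lt_coe_iff.2 ((lt_div_iff₀' hr).2 h)
  | top => rw [EReal.coe_mul_top_of_pos hr] at h; exact absurd h not_top_lt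

/-! coneExponent and dirExp lemmas -/

theorem integrand_continuous (s : ℝ) :
    Continuous fun z : E => ENNReal.ofReal (Real.exp (-s * ‖z‖)) :=
  ENNReal.continuous_ofReal.comp (Real.continuous_exp.comp (continuous_const.mul continuous_norm))

theorem lintegral_finite_mono {μ : Measure E} {C C' : Set E} {s t : ℝ} (hst : s ≤ t)
    (hCC : C' ⊆ C)
    (h : ∫⁻ x in C, ENNReal.ofReal (Real.exp (-s * ‖x‖)) ∂μ < ⊤) :
    ∫⁻ x in C', ENNReal.ofReal (Real.exp (-t * ‖x‖)) ∂μ < ⊤ := by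
  refine lt_of_le_of_lt (le_trans (lintegral_mono fun z => ?_) (lintegral_mono_set hCC)) h
  exact ENNReal.ofReal_le_ofReal (Real.exp_le_exp.2 (by nlinarith [norm_nonneg z]))

theorem coneExponent_le_of_finite {μ : Measure E} {C : Set E} {s : ℝ}
    (h : ∫⁻ x in C, ENNReal.ofReal (Real.exp (-s * ‖x‖)) ∂μ < ⊤) :
    coneExponent μ C ≤ (s : EReal) :=
  sInf_le ⟨s, h, rfl⟩

theorem finite_of_coneExponent_lt {μ : Measure E} {C : Set E} {s : ℝ}
    (h : coneExponent μ C < (s : EReal)) :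
    ∫⁻ x in C, ENNReal.ofReal (Real.exp (-s * ‖x‖)) ∂μ < ⊤ := by
  obtain ⟨a, ⟨t, ht, rfl⟩, hlt⟩ := sInf_lt_iff.1 h
  exact lintegral_finite_mono (le_of_lt (EReal.coe_lt_coe_iff.1 hlt)) (subset_refl _) ht

def dirExp (μ : Measure E) (x : E) : EReal :=
  sInf (coneExponent μ '' {C : Set E | IsOpenCone C ∧ x ∈ C})

theorem growthIndicator_eq_dirExp {μ : Measure E} {x : E} (hx : x ≠ 0) :
    growthIndicator μ x = (‖x‖ : EReal) * dirExp μ x := if_neg hx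

theorem dirExp_le {μ : Measure E} {C : Set E} {x : E} (hC : IsOpenCone C) (hx : x ∈ C) :
    dirExp μ x ≤ coneExponent μ C :=
  sInf_le ⟨C, ⟨hC, hx⟩, rfl⟩

theorem exists_cone_of_dirExp_lt {μ : Measure E} {x : E} {c : EReal} (h : dirExp μ x < c) :
    ∃ C : Set E, IsOpenCone C ∧ x ∈ C ∧ coneExponent μ C < c := by
  obtain ⟨a, ⟨C, ⟨hC, hx⟩, rfl⟩, hlt⟩ := sInf_lt_iff.1 h
  exact ⟨C, hC, hx, hlt⟩

theorem mem_cone_smul {C : Set E} (hC : IsOpenCone C) {x : E} (hx : x ∈ C) {t : ℝ}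
    (ht : 0 < t) : t • x ∈ C := hC.2 x hx t ht

theorem dirExp_smul (μ : Measure E) (x : E) {t : ℝ} (ht : 0 < t) :
    dirExp μ (t • x) = dirExp μ x := by
  unfold dirExp
  congr 1
  ext C
  constructor
  · rintro ⟨C', ⟨hC', hx'⟩, rfl⟩
    refine ⟨C', ⟨hC', ?_⟩, rfl⟩
    have := hC'.2 _ hx' t⁻¹ (by positivity)
    rwa [inv_smul_smul₀ ht.ne'] at this
  · rintro ⟨C', ⟨hC', hx'⟩, rfl⟩
    exact ⟨C', ⟨hC', hC'.2 _ hx' t ht⟩, rfl⟩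

theorem isOpenCone_inter {C C' : Set E} (h : IsOpenCone C) (h' : IsOpenCone C') :
    IsOpenCone (C ∩ C') :=
  ⟨h.1.inter h'.1, fun x hx t ht => ⟨h.2 x hx.1 t ht, h'.2 x hx.2 t ht⟩⟩


theorem exists_real_of_coneExponent_lt {E : Type*} [SeminormedAddCommGroup E]
    [MeasurableSpace E] {μ : Measure E} {C : Set E} {q : ℝ}
    (h : coneExponent μ C < (q : EReal)) :
    ∃ t : ℝ, t < q ∧ ∫⁻ x in C, ENNReal.ofReal (Real.exp (-t * ‖x‖)) ∂μ < ⊤ := by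
  obtain ⟨a, ⟨t, ht, rfl⟩, hlt⟩ := sInf_lt_iff.1 h
  exact ⟨t, EReal.coe_lt_coe_iff.1 hlt, ht⟩

theorem lintegral_finset_biUnion_le {α ι : Type*} [MeasurableSpace α] (μ : Measure α)
    (T : Finset ι) (C : ι → Set α) (f : α → ENNReal) :
    ∫⁻ z in ⋃ i ∈ T, C i, f z ∂μ ≤ ∑ i ∈ T, ∫⁻ z in C i, f z ∂μ := by
  classical
  induction T using Finset.induction with
  | empty => simp
  | insert a T' h ih =>
      rw [Finset.set_biUnion_insert, Finset.sum_insert h]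
      refine le_trans (lintegral_mono' (Measure.restrict_union_le _ _) le_rfl) ?_
      rw [lintegral_add_measure]
      exact add_le_add le_rfl ih

section Main

variable {E : Type*} [NormedAddCommGroup E] [NormedSpace ℝ E] [FiniteDimensional ℝ E]
  [MeasurableSpace E] [BorelSpace E]
  (F : Submodule ℝ E) [MeasurableSpace (E ⧸ F)] [BorelSpace (E ⧸ F)]

theorem mkQ_continuous : Continuous F.mkQ :=
  F.mkQ.continuous_of_finiteDimensional

theorem norm_mkQ_le (z : E) : ‖F.mkQ z‖ ≤ ‖z‖ := by
  rw [Submodule.mkQ_apply]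
  exact Submodule.Quotient.norm_mk_le F z

theorem mem_of_norm_mkQ_eq_zero {z : E} (h : ‖F.mkQ z‖ = 0) : z ∈ F := by
  have h2 : z ∈ closure (F.toAddSubgroup : Set E) :=
    (QuotientAddGroup.norm_mk_eq_zero_iff_mem_closure (S := F.toAddSubgroup) (m := z)).1 h
  rwa [Submodule.coe_toAddSubgroup, F.closed_of_finiteDimensional.closure_eq] at h2

theorem mkQ_eq_zero_iff {z : E} : F.mkQ z = 0 ↔ z ∈ F := by
  rw [Submodule.mkQ_apply, Submodule.Quotient.mk_eq_zero]

theorem norm_quot_pos {y : E ⧸ F} (hy : y ≠ 0) : 0 < ‖y‖ := by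
  obtain ⟨z, rfl⟩ := F.mkQ_surjective y
  rcases (norm_nonneg (F.mkQ z)).eq_or_lt' with h | h
  · exact absurd ((mkQ_eq_zero_iff F).2 (mem_of_norm_mkQ_eq_zero F h)) hy
  · exact h


theorem cone_near_F (μ : Measure E)
    (hF : ∀ x : E, x ∈ F → x ≠ 0 → growthIndicator μ x = ⊥) (t : ℝ) :
    ∃ U : Set E, IsOpenCone U ∧ (∀ x : E, x ∈ F → x ≠ 0 → x ∈ U) ∧
      ∫⁻ z in U, ENNReal.ofReal (Real.exp (-t * ‖z‖)) ∂μ < ⊤ := by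
  classical
  set K : Set E := (F : Set E) ∩ Metric.sphere 0 1 with hK
  have hcov : ∀ u ∈ K, ∃ C : Set E, IsOpenCone C ∧ u ∈ C ∧
      ∫⁻ z in C, ENNReal.ofReal (Real.exp (-t * ‖z‖)) ∂μ < ⊤ := by
    intro u hu
    have hu1 : ‖u‖ = 1 := mem_sphere_zero_iff_norm.1 hu.2
    have hu0 : u ≠ 0 := by
      intro h; rw [h, norm_zero] at hu1; norm_num at hu1
    have hbot := hF u hu.1 hu0
    rw [growthIndicator_eq_dirExp hu0] at hbot
    have hdir : dirExp μ u = ⊥ :=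
      ereal_bot_of_mul_bot (by rw [hu1]; norm_num : (0:ℝ) < ‖u‖) hbot
    obtain ⟨C, hC1, hC2, hC3⟩ := exists_cone_of_dirExp_lt
      (c := (t : EReal)) (by rw [hdir]; exact EReal.bot_lt_coe t)
    exact ⟨C, hC1, hC2, finite_of_coneExponent_lt hC3⟩
  choose! C hC1 hC2 hC3 using hcov
  have hKc : IsCompact K := (isCompact_sphere (0:E) 1).inter_left F.closed_of_finiteDimensional
  obtain ⟨T, hT⟩ := hKc.elim_finite_subcover (fun u : K => C u)
    (fun u => (hC1 u u.2).1) (fun x hx => Set.mem_iUnion.2 ⟨⟨x, hx⟩, hC2 x hx⟩)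
  refine ⟨⋃ u ∈ T, C u,
    ⟨isOpen_biUnion fun u _ => (hC1 u u.2).1, ?_⟩, ?_, ?_⟩
  · rintro x hx c hc
    obtain ⟨u, huT, hxu⟩ := Set.mem_iUnion₂.1 hx
    exact Set.mem_iUnion₂.2 ⟨u, huT, (hC1 u u.2).2 x hxu c hc⟩
  · intro x hxF hx0
    have hnx : (0:ℝ) < ‖x‖ := norm_pos_iff.2 hx0
    have huK : ‖x‖⁻¹ • x ∈ K := ⟨F.smul_mem _ hxF, by
      rw [mem_sphere_zero_iff_norm, norm_smul, norm_inv, norm_norm, inv_mul_cancel₀ hnx.ne']⟩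
    obtain ⟨i, hiT, hiu⟩ := Set.mem_iUnion₂.1 (hT huK)
    have hx' : x ∈ C i := by
      have := (hC1 i i.2).2 _ hiu ‖x‖ hnx
      rwa [smul_inv_smul₀ hnx.ne'] at this
    exact Set.mem_iUnion₂.2 ⟨i, hiT, hx'⟩
  · refine lt_of_le_of_lt (lintegral_finset_biUnion_le μ T (fun u : K => C u) _) ?_
    exact ENNReal.sum_lt_top.2 fun i _ => hC3 i i.2

theorem small_quotient_norm_cone (μ : Measure E)
    (hF : ∀ x : E, x ∈ F → x ≠ 0 → growthIndicator μ x = ⊥) (t : ℝ) :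
    ∃ δ : ℝ, 0 < δ ∧
      ∫⁻ z in {z : E | ‖F.mkQ z‖ < δ * ‖z‖}, ENNReal.ofReal (Real.exp (-t * ‖z‖)) ∂μ < ⊤ := by
  obtain ⟨U, hU, hUF, hUfin⟩ := cone_near_F F μ hF t
  have key : ∀ δ : ℝ, 0 < δ → (∀ u ∈ Metric.sphere (0:E) 1, ‖F.mkQ u‖ < δ → u ∈ U) →
      {z : E | ‖F.mkQ z‖ < δ * ‖z‖} ⊆ U := by
    intro δ hδ hsph z hz
    rw [Set.mem_setOf_eq] at hz
    have h1 : 0 < ‖z‖ := by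
      by_contra h
      push_neg at h
      have h0 : ‖z‖ = 0 := le_antisymm h (norm_nonneg z)
      rw [h0, mul_zero] at hz
      exact absurd hz (not_lt.2 (norm_nonneg _))
    have hu : ‖z‖⁻¹ • z ∈ Metric.sphere (0:E) 1 := by
      rw [mem_sphere_zero_iff_norm, norm_smul, norm_inv, norm_norm, inv_mul_cancel₀ h1.ne']
    have hun : ‖F.mkQ (‖z‖⁻¹ • z)‖ < δ := by
      rw [F.mkQ.map_smul, norm_smul, norm_inv, norm_norm]
      calc ‖z‖⁻¹ * ‖F.mkQ z‖ < ‖z‖⁻¹ * (δ * ‖z‖) :=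
            mul_lt_mul_of_pos_left hz (by positivity)
        _ = δ := by field_simp
    have := hU.2 _ (hsph _ hu hun) ‖z‖ h1
    rwa [smul_inv_smul₀ h1.ne'] at this
  rcases (Metric.sphere (0:E) 1 \ U).eq_empty_or_nonempty with h | h
  · refine ⟨1, one_pos, lt_of_le_of_lt (lintegral_mono_set (key 1 one_pos fun u hu _ => ?_)) hUfin⟩
    by_contra hc
    have : u ∈ Metric.sphere (0:E) 1 \ U := ⟨hu, hc⟩
    rw [h] at this
    exact absurd this (Set.notMem_empty u)
  · obtain ⟨u₀, hu₀, hmin⟩ := ((isCompact_sphere (0:E) 1).diff hU.1).exists_isMinOn h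
      ((mkQ_continuous F).norm.continuousOn)
    have hδ : 0 < ‖F.mkQ u₀‖ := by
      rcases (norm_nonneg (F.mkQ u₀)).eq_or_lt' with h0 | h0
      · exfalso
        have hu₀F : u₀ ∈ F := mem_of_norm_mkQ_eq_zero F h0
        have hu₀0 : u₀ ≠ 0 := by
          intro hh
          have h2 := hu₀.1
          rw [hh, mem_sphere_zero_iff_norm, norm_zero] at h2
          norm_num at h2
        exact hu₀.2 (hUF u₀ hu₀F hu₀0)
      · exact h0
    refine ⟨‖F.mkQ u₀‖, hδ, lt_of_le_of_lt
      (lintegral_mono_set (key _ hδ fun u hu hlt => ?_)) hUfin⟩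
    by_contra hc
    have hmem : u ∈ Metric.sphere (0:E) 1 \ U := ⟨hu, hc⟩
    exact absurd hlt (not_lt.2 (isMinOn_iff.1 hmin u hmem))

theorem pi_integral_finite (μ : Measure E) (hsubexp : SubexpDiv μ)
    (hF : ∀ x : E, x ∈ F → x ≠ 0 → growthIndicator μ x = ⊥) :
    ∃ s : ℝ, 0 ≤ s ∧ ∫⁻ z, ENNReal.ofReal (Real.exp (-s * ‖F.mkQ z‖)) ∂μ < ⊤ := by
  obtain ⟨s₀, hs₀⟩ := hsubexp
  set s₁ := max s₀ 0 with hs₁def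
  have hs₁0 : 0 ≤ s₁ := le_max_right _ _
  have hglob : ∫⁻ z, ENNReal.ofReal (Real.exp (-s₁ * ‖z‖)) ∂μ < ⊤ := by
    refine lt_of_le_of_lt (lintegral_mono fun z => ENNReal.ofReal_le_ofReal
      (Real.exp_le_exp.2 ?_)) hs₀
    nlinarith [norm_nonneg z, le_max_left s₀ 0]
  obtain ⟨δ, hδ, hV⟩ := small_quotient_norm_cone F μ hF 0
  set V := {z : E | ‖F.mkQ z‖ < δ * ‖z‖} with hVdef
  have hVmeas : MeasurableSet V :=
    (isOpen_lt ((mkQ_continuous F).norm) (continuous_const.mul continuous_norm)).measurableSet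
  have hs : (0:ℝ) ≤ s₁ / δ := div_nonneg hs₁0 hδ.le
  refine ⟨s₁ / δ, hs, ?_⟩
  rw [← lintegral_add_compl (fun z => ENNReal.ofReal (Real.exp (-(s₁/δ) * ‖F.mkQ z‖))) hVmeas]
  have h1 : ∫⁻ z in V, ENNReal.ofReal (Real.exp (-(s₁/δ) * ‖F.mkQ z‖)) ∂μ < ⊤ := by
    refine lt_of_le_of_lt (setLIntegral_mono (integrand_continuous 0).measurable
      fun z _ => ENNReal.ofReal_le_ofReal (Real.exp_le_exp.2 ?_)) hV
    have h3 : 0 ≤ (s₁/δ) * ‖F.mkQ z‖ := mul_nonneg hs (norm_nonneg _)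
    simp only [neg_zero, zero_mul]
    linarith
  have h2 : ∫⁻ z in Vᶜ, ENNReal.ofReal (Real.exp (-(s₁/δ) * ‖F.mkQ z‖)) ∂μ < ⊤ := by
    refine lt_of_le_of_lt (le_trans (setLIntegral_mono (integrand_continuous s₁).measurable
      fun z hz => ENNReal.ofReal_le_ofReal (Real.exp_le_exp.2 ?_))
      (setLIntegral_le_lintegral _ _)) hglob
    have hz' : δ * ‖z‖ ≤ ‖F.mkQ z‖ := by
      have := hz
      rw [Set.mem_compl_iff, hVdef, Set.mem_setOf_eq, not_lt] at this
      exact this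
    have h4 : (s₁/δ) * (δ * ‖z‖) ≤ (s₁/δ) * ‖F.mkQ z‖ := mul_le_mul_of_nonneg_left hz' hs
    have heq : (s₁/δ) * (δ * ‖z‖) = s₁ * ‖z‖ := by field_simp
    have h5 : s₁ * ‖z‖ ≤ (s₁/δ) * ‖F.mkQ z‖ := heq ▸ h4
    linarith
  exact ENNReal.add_lt_top.2 ⟨h1, h2⟩

theorem dirExp_quot_le (μ : Measure E)
    (hF : ∀ x : E, x ∈ F → x ≠ 0 → growthIndicator μ x = ⊥)
    {y : E ⧸ F} (hy : y ≠ 0) {s : ℝ}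
    (hs : sSup (growthIndicator μ '' {x : E | F.mkQ x = y}) < (‖y‖ : EReal) * (s : EReal)) :
    dirExp (Measure.map F.mkQ μ) y ≤ (s : EReal) := by
  classical
  have hr : 0 < ‖y‖ := norm_quot_pos F hy
  set r : ℝ := ‖y‖ with hrdef
  obtain ⟨x', hx'⟩ := F.mkQ_surjective y
  set A : Set E := {u : E | ‖u‖ = 1 ∧ ‖(r : ℝ) • F.mkQ u - ‖F.mkQ u‖ • y‖ = 0} with hAdef
  have hπc : Continuous fun u : E => F.mkQ u := mkQ_continuous F
  have hφc : Continuous fun u : E => ‖(r : ℝ) • F.mkQ u - ‖F.mkQ u‖ • y‖ :=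
    ((hπc.const_smul (r : ℝ)).sub (hπc.norm.smul continuous_const)).norm
  have hAc : IsCompact A := by
    have hsub : A ⊆ Metric.sphere (0:E) 1 := fun u hu => mem_sphere_zero_iff_norm.2 hu.1
    have hcl : IsClosed A :=
      (isClosed_eq continuous_norm continuous_const).inter (isClosed_eq hφc continuous_const)
    exact (isCompact_sphere (0:E) 1).of_isClosed_subset hcl hsub
  have hcov : ∀ u ∈ A, ∃ C : Set E, IsOpenCone C ∧ u ∈ C ∧
      ∫⁻ z in C, ENNReal.ofReal (Real.exp (-s * ‖F.mkQ z‖)) ∂μ < ⊤ := by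
    intro u hu
    obtain ⟨hu1, hu2⟩ := hu
    have hu0 : u ≠ 0 := by
      intro hh; rw [hh, norm_zero] at hu1; norm_num at hu1
    have hmain : ∃ t₀ : ℝ, t₀ < s * ‖F.mkQ u‖ ∧
        ∃ C : Set E, IsOpenCone C ∧ u ∈ C ∧
          ∫⁻ z in C, ENNReal.ofReal (Real.exp (-t₀ * ‖z‖)) ∂μ < ⊤ := by
      rcases (norm_nonneg (F.mkQ u)).eq_or_lt' with hc0 | hc0
      · -- ‖F.mkQ u‖ = 0 : u ∈ F
        have huF : u ∈ F := mem_of_norm_mkQ_eq_zero F hc0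
        have hbot := hF u huF hu0
        rw [growthIndicator_eq_dirExp hu0] at hbot
        have hdir : dirExp μ u = ⊥ :=
          ereal_bot_of_mul_bot (by rw [hu1]; norm_num : (0:ℝ) < ‖u‖) hbot
        obtain ⟨C, hC1, hC2, hC3⟩ := exists_cone_of_dirExp_lt
          (c := ((-1 : ℝ) : EReal)) (by rw [hdir]; exact EReal.bot_lt_coe _)
        obtain ⟨t₀, ht₀, ht₀fin⟩ := exists_real_of_coneExponent_lt hC3
        refine ⟨t₀, ?_, C, hC1, hC2, ht₀fin⟩
        rw [hc0, mul_zero]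
        linarith
      · -- ‖F.mkQ u‖ > 0
        set c : ℝ := ‖F.mkQ u‖ with hcdef
        have heq : (r : ℝ) • F.mkQ u = c • y := by
          have h2 : F.mkQ ((r : ℝ) • u - c • x') = (r : ℝ) • F.mkQ u - c • y := by
            rw [map_sub, F.mkQ.map_smul, F.mkQ.map_smul, hx']
          have hmem : (r : ℝ) • u - c • x' ∈ F := by
            apply mem_of_norm_mkQ_eq_zero F
            rw [h2]; exact hu2
          have h3 : F.mkQ ((r : ℝ) • u - c • x') = 0 := (mkQ_eq_zero_iff F).2 hmem
          rw [h2] at h3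
          exact sub_eq_zero.1 h3
        set x : E := (r / c) • u with hxdef
        have hxy : F.mkQ x = y := by
          rw [hxdef, F.mkQ.map_smul]
          have : (r / c) • F.mkQ u = c⁻¹ • ((r : ℝ) • F.mkQ u) := by
            rw [smul_smul]; congr 1; field_simp
          rw [this, heq, smul_smul, inv_mul_cancel₀ hc0.ne', one_smul]
        have hx0 : x ≠ 0 := by
          intro hh
          exact hy (by rw [← hxy, hh, map_zero])
        have hgi : growthIndicator μ x ≤ sSup (growthIndicator μ '' {x : E | F.mkQ x = y}) :=
          le_sSup ⟨x, hxy, rfl⟩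
        have hlt : (‖x‖ : EReal) * dirExp μ x < ((r * s : ℝ) : EReal) := by
          rw [← growthIndicator_eq_dirExp hx0, EReal.coe_mul]
          exact lt_of_le_of_lt hgi hs
        have hnx : ‖x‖ = r / c := by
          rw [hxdef, norm_smul, hu1, mul_one, Real.norm_of_nonneg (by positivity)]
        have hde : dirExp μ x = dirExp μ u := dirExp_smul μ u (by positivity)
        rw [hnx, hde] at hlt
        have h3 := ereal_lt_div_of_mul_lt (div_pos hr hc0) hlt
        have harith : (r * s) / (r / c) = s * c := by field_simp
        rw [harith] at h3
        obtain ⟨C, hC1, hC2, hC3⟩ := exists_cone_of_dirExp_lt h3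
        obtain ⟨t₀, ht₀, ht₀fin⟩ := exists_real_of_coneExponent_lt hC3
        exact ⟨t₀, ht₀, C, hC1, hC2, ht₀fin⟩
    obtain ⟨t₀, ht₀, C, hC1, hC2, ht₀fin⟩ := hmain
    have hSopen : IsOpen {z : E | t₀ * ‖z‖ < s * ‖F.mkQ z‖} :=
      isOpen_lt (continuous_const.mul continuous_norm) (continuous_const.mul hπc.norm)
    have hScone : IsOpenCone {z : E | t₀ * ‖z‖ < s * ‖F.mkQ z‖} := by
      refine ⟨hSopen, fun z hz c' hc' => ?_⟩
      rw [Set.mem_setOf_eq] at hz ⊢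
      rw [norm_smul, F.mkQ.map_smul, norm_smul, Real.norm_of_nonneg hc'.le]
      calc t₀ * (c' * ‖z‖) = c' * (t₀ * ‖z‖) := by ring
        _ < c' * (s * ‖F.mkQ z‖) := mul_lt_mul_of_pos_left hz hc'
        _ = s * (c' * ‖F.mkQ z‖) := by ring
    refine ⟨C ∩ {z : E | t₀ * ‖z‖ < s * ‖F.mkQ z‖}, isOpenCone_inter hC1 hScone,
      ⟨hC2, by rw [Set.mem_setOf_eq, hu1, mul_one]; exact ht₀⟩, ?_⟩
    refine lt_of_le_of_lt (le_trans (setLIntegral_mono' (hC1.1.inter hSopen).measurableSet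
      fun z hz => ENNReal.ofReal_le_ofReal (Real.exp_le_exp.2 ?_))
      (lintegral_mono_set Set.inter_subset_left)) ht₀fin
    have := hz.2
    rw [Set.mem_setOf_eq] at this
    linarith
  choose! Cu hCu1 hCu2 hCu3 using hcov
  obtain ⟨T, hT⟩ := hAc.elim_finite_subcover (fun u : A => Cu u)
    (fun u => (hCu1 u u.2).1) (fun x hx => Set.mem_iUnion.2 ⟨⟨x, hx⟩, hCu2 x hx⟩)
  set W : Set E := ⋃ u ∈ T, Cu u with hWdef
  have hWopen : IsOpen W := isOpen_biUnion fun u _ => (hCu1 u u.2).1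
  have hWcone : ∀ z ∈ W, ∀ c' : ℝ, 0 < c' → c' • z ∈ W := by
    intro z hz c' hc'
    obtain ⟨u, huT, hzu⟩ := Set.mem_iUnion₂.1 hz
    exact Set.mem_iUnion₂.2 ⟨u, huT, (hCu1 u u.2).2 z hzu c' hc'⟩
  -- find η > 0 bounding φ from below on sphere \ W
  obtain ⟨η, hη, hηm⟩ : ∃ η : ℝ, 0 < η ∧ ∀ u ∈ Metric.sphere (0:E) 1 \ W,
      η ≤ ‖(r : ℝ) • F.mkQ u - ‖F.mkQ u‖ • y‖ := by
    rcases (Metric.sphere (0:E) 1 \ W).eq_empty_or_nonempty with h | h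
    · exact ⟨1, one_pos, fun u hu => by rw [h] at hu; exact absurd hu (Set.notMem_empty u)⟩
    · obtain ⟨u₀, hu₀, hmin⟩ := ((isCompact_sphere (0:E) 1).diff hWopen).exists_isMinOn h
        hφc.continuousOn
      refine ⟨‖(r : ℝ) • F.mkQ u₀ - ‖F.mkQ u₀‖ • y‖, ?_, fun u hu => isMinOn_iff.1 hmin u hu⟩
      rcases (norm_nonneg ((r : ℝ) • F.mkQ u₀ - ‖F.mkQ u₀‖ • y)).eq_or_lt' with h0 | h0
      · exfalso
        have huA : u₀ ∈ A := ⟨mem_sphere_zero_iff_norm.1 hu₀.1, h0⟩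
        exact hu₀.2 (hT huA)
      · exact h0
  set D : Set (E ⧸ F) := {w : E ⧸ F | ‖(r : ℝ) • w - ‖w‖ • y‖ < η * ‖w‖} with hDdef
  have hDopen : IsOpen D :=
    isOpen_lt ((continuous_id.const_smul (r:ℝ)).sub (continuous_norm.smul continuous_const)).norm
      (continuous_const.mul continuous_norm)
  have hDcone : IsOpenCone D := by
    refine ⟨hDopen, fun w hw c' hc' => ?_⟩
    rw [Set.mem_setOf_eq] at hw ⊢
    have h1 : ‖c' • w‖ = c' * ‖w‖ := by rw [norm_smul, Real.norm_of_nonneg hc'.le]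
    have h2 : (r : ℝ) • (c' • w) - ‖c' • w‖ • y = c' • ((r : ℝ) • w - ‖w‖ • y) := by
      rw [h1]; module
    rw [h2, norm_smul, Real.norm_of_nonneg hc'.le, h1]
    calc c' * ‖(r : ℝ) • w - ‖w‖ • y‖ < c' * (η * ‖w‖) := mul_lt_mul_of_pos_left hw hc'
      _ = η * (c' * ‖w‖) := by ring
  have hyD : y ∈ D := by
    rw [hDdef, Set.mem_setOf_eq, ← hrdef, sub_self, norm_zero]
    positivity
  have hpre : F.mkQ ⁻¹' D ⊆ W := by
    intro z hz
    rw [Set.mem_preimage, hDdef, Set.mem_setOf_eq] at hz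
    have hq : 0 < ‖F.mkQ z‖ := by
      by_contra hh
      push_neg at hh
      have h0 : ‖F.mkQ z‖ = 0 := le_antisymm hh (norm_nonneg _)
      rw [h0, mul_zero] at hz
      exact absurd hz (not_lt.2 (norm_nonneg _))
    have hz0 : 0 < ‖z‖ := lt_of_lt_of_le hq (norm_mkQ_le F z)
    have hu_sph : ‖z‖⁻¹ • z ∈ Metric.sphere (0:E) 1 := by
      rw [mem_sphere_zero_iff_norm, norm_smul, norm_inv, norm_norm, inv_mul_cancel₀ hz0.ne']
    have hmk : F.mkQ (‖z‖⁻¹ • z) = ‖z‖⁻¹ • F.mkQ z := F.mkQ.map_smul _ _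
    have hnu : ‖F.mkQ (‖z‖⁻¹ • z)‖ = ‖z‖⁻¹ * ‖F.mkQ z‖ := by
      rw [hmk, norm_smul, norm_inv, norm_norm]
    have hφu : ‖(r : ℝ) • F.mkQ (‖z‖⁻¹ • z) - ‖F.mkQ (‖z‖⁻¹ • z)‖ • y‖ < η := by
      have heq2 : (r : ℝ) • F.mkQ (‖z‖⁻¹ • z) - ‖F.mkQ (‖z‖⁻¹ • z)‖ • y
          = ‖z‖⁻¹ • ((r : ℝ) • F.mkQ z - ‖F.mkQ z‖ • y) := by
        rw [hnu, hmk]; module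
      rw [heq2, norm_smul, norm_inv, norm_norm]
      have hstep : ‖z‖⁻¹ * ‖(r : ℝ) • F.mkQ z - ‖F.mkQ z‖ • y‖ < ‖z‖⁻¹ * (η * ‖F.mkQ z‖) :=
        mul_lt_mul_of_pos_left hz (by positivity)
      have hstep2 : ‖z‖⁻¹ * (η * ‖F.mkQ z‖) ≤ η := by
        have hle : ‖z‖⁻¹ * ‖F.mkQ z‖ ≤ 1 := by
          rw [← inv_mul_cancel₀ hz0.ne']
          exact mul_le_mul_of_nonneg_left (norm_mkQ_le F z) (by positivity)
        calc ‖z‖⁻¹ * (η * ‖F.mkQ z‖) = η * (‖z‖⁻¹ * ‖F.mkQ z‖) := by ring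
          _ ≤ η * 1 := mul_le_mul_of_nonneg_left hle hη.le
          _ = η := mul_one η
      linarith
    have huW : ‖z‖⁻¹ • z ∈ W := by
      by_contra hc
      exact absurd (hηm _ ⟨hu_sph, hc⟩) (not_le.2 hφu)
    have hfin := hWcone _ huW ‖z‖ hz0
    rwa [smul_inv_smul₀ hz0.ne'] at hfin
  have hDfin : ∫⁻ w in D, ENNReal.ofReal (Real.exp (-s * ‖w‖)) ∂(Measure.map F.mkQ μ) < ⊤ := by
    rw [setLIntegral_map hDopen.measurableSet (integrand_continuous s).measurable
      (mkQ_continuous F).measurable]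
    refine lt_of_le_of_lt (lintegral_mono_set hpre) ?_
    rw [hWdef]
    refine lt_of_le_of_lt (lintegral_finset_biUnion_le μ T (fun u : A => Cu u) _) ?_
    exact ENNReal.sum_lt_top.2 fun i _ => hCu3 i i.2
  exact le_trans (dirExp_le hDcone hyD) (coneExponent_le_of_finite hDfin)

end Main

theorem growthIndicator_quotient
    {E : Type*} [NormedAddCommGroup E] [NormedSpace ℝ E] [FiniteDimensional ℝ E]
    [MeasurableSpace E] [BorelSpace E]
    (F : Submodule ℝ E)
    [MeasurableSpace (E ⧸ F)] [BorelSpace (E ⧸ F)]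
    (μ : Measure E) [IsFiniteMeasureOnCompacts μ]
    (hsubexp : SubexpDiv μ)
    (hF : ∀ x : E, x ∈ F → x ≠ 0 → growthIndicator μ x = ⊥) :
    (∀ K : Set (E ⧸ F), IsCompact K → Measure.map F.mkQ μ K < ⊤) ∧
    SubexpDiv (Measure.map F.mkQ μ) ∧
    ∀ y : E ⧸ F, growthIndicator (Measure.map F.mkQ μ) y =
      sSup (growthIndicator μ '' {x : E | F.mkQ x = y}) := by
  have hπm : Measurable F.mkQ := (mkQ_continuous F).measurable
  obtain ⟨s₂, hs₂0, hs₂⟩ := pi_integral_finite F μ hsubexp hF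
  have hν : SubexpDiv (Measure.map F.mkQ μ) :=
    ⟨s₂, by rw [lintegral_map (integrand_continuous s₂).measurable hπm]; exact hs₂⟩
  refine ⟨?_, hν, ?_⟩
  · -- finite on compacts
    intro K hK
    obtain ⟨R, hR⟩ := hK.isBounded.subset_closedBall 0
    have h1 : Measure.map F.mkQ μ K ≤ μ (F.mkQ ⁻¹' Metric.closedBall 0 R) := by
      rw [← Measure.map_apply hπm measurableSet_closedBall]
      exact measure_mono hR
    have key : ENNReal.ofReal (Real.exp (-s₂ * R)) * μ (F.mkQ ⁻¹' Metric.closedBall 0 R)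
        ≤ ∫⁻ z, ENNReal.ofReal (Real.exp (-s₂ * ‖F.mkQ z‖)) ∂μ := by
      rw [← setLIntegral_const]
      refine le_trans (setLIntegral_mono
        ((integrand_continuous s₂).comp (mkQ_continuous F)).measurable fun z hz => ?_)
        (setLIntegral_le_lintegral _ _)
      refine ENNReal.ofReal_le_ofReal (Real.exp_le_exp.2 ?_)
      have hzR : ‖F.mkQ z‖ ≤ R := by
        rw [Set.mem_preimage, mem_closedBall_zero_iff] at hz
        exact hz
      nlinarith
    have hfin : μ (F.mkQ ⁻¹' Metric.closedBall 0 R) < ⊤ := by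
      by_contra hh
      push_neg at hh
      rw [top_le_iff.1 hh, ENNReal.mul_top (ENNReal.ofReal_pos.2 (Real.exp_pos _)).ne'] at key
      exact absurd (lt_of_le_of_lt key hs₂) (lt_irrefl _)
    exact lt_of_le_of_lt h1 hfin
  · -- the growth indicator formula
    intro y
    rcases eq_or_ne y 0 with rfl | hy
    · have h0 : growthIndicator (Measure.map F.mkQ μ) (0 : E ⧸ F) = 0 := if_pos rfl
      rw [h0]
      refine (le_antisymm (sSup_le ?_) ?_).symm
      · rintro v ⟨x, hx, rfl⟩
        rw [Set.mem_setOf_eq] at hx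
        rcases eq_or_ne x 0 with rfl | hx0
        · exact le_of_eq (if_pos rfl)
        · rw [hF x ((mkQ_eq_zero_iff F).1 hx) hx0]
          exact bot_le
      · have hmem : growthIndicator μ 0 ∈ growthIndicator μ '' {x : E | F.mkQ x = (0 : E ⧸ F)} :=
          ⟨0, by rw [Set.mem_setOf_eq, map_zero], rfl⟩
        have h2 := le_sSup hmem
        have h3 : growthIndicator μ (0 : E) = 0 := if_pos rfl
        rwa [h3] at h2
    · have hr : 0 < ‖y‖ := norm_quot_pos F hy
      rw [growthIndicator_eq_dirExp hy]
      refine le_antisymm ?_ ?_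
      · -- ψ_ν(y) ≤ sSup
        refine ereal_le_of_forall_mul hr fun s hs => ?_
        exact ereal_mul_le_mul_left hr (dirExp_quot_le F μ hF hy hs)
      · -- sSup ≤ ψ_ν(y)
        refine sSup_le ?_
        rintro v ⟨x, hx, rfl⟩
        rw [Set.mem_setOf_eq] at hx
        have hx0 : x ≠ 0 := by
          intro hh
          exact hy (by rw [← hx, hh, map_zero])
        have hnx : (0:ℝ) < ‖x‖ := norm_pos_iff.2 hx0
        rw [growthIndicator_eq_dirExp hx0]
        refine ereal_le_mul_of_forall hr fun s hs => ?_
        obtain ⟨D, hD, hyD, hDlt⟩ := exists_cone_of_dirExp_lt hs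
        have hDfin := finite_of_coneExponent_lt hDlt
        rw [setLIntegral_map hD.1.measurableSet (integrand_continuous s).measurable hπm] at hDfin
        have key : (‖x‖ : EReal) * dirExp μ x ≤
            (‖x‖ : EReal) * (((‖y‖ * s) / ‖x‖ : ℝ) : EReal) := by
          refine ereal_le_mul_of_forall hnx fun t ht => ?_
          have htr : ‖y‖ * s < ‖x‖ * t := by
            rw [EReal.coe_lt_coe_iff] at ht
            calc ‖y‖ * s = (‖y‖ * s / ‖x‖) * ‖x‖ := by field_simp
              _ < t * ‖x‖ := mul_lt_mul_of_pos_right ht hnx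
              _ = ‖x‖ * t := mul_comm _ _
          have hSopen : IsOpen {z : E | s * ‖F.mkQ z‖ < t * ‖z‖} :=
            isOpen_lt (continuous_const.mul (mkQ_continuous F).norm)
              (continuous_const.mul continuous_norm)
          have hCcone : IsOpenCone (F.mkQ ⁻¹' D ∩ {z : E | s * ‖F.mkQ z‖ < t * ‖z‖}) := by
            refine isOpenCone_inter ⟨hD.1.preimage (mkQ_continuous F), ?_⟩ ⟨hSopen, ?_⟩
            · intro z hz c' hc'
              rw [Set.mem_preimage, F.mkQ.map_smul]
              exact hD.2 _ hz c' hc'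
            · intro z hz c' hc'
              rw [Set.mem_setOf_eq] at hz ⊢
              rw [F.mkQ.map_smul, norm_smul, norm_smul, Real.norm_of_nonneg hc'.le]
              calc s * (c' * ‖F.mkQ z‖) = c' * (s * ‖F.mkQ z‖) := by ring
                _ < c' * (t * ‖z‖) := mul_lt_mul_of_pos_left hz hc'
                _ = t * (c' * ‖z‖) := by ring
          have hxC : x ∈ F.mkQ ⁻¹' D ∩ {z : E | s * ‖F.mkQ z‖ < t * ‖z‖} := by
            refine ⟨by rw [Set.mem_preimage, hx]; exact hyD, ?_⟩
            rw [Set.mem_setOf_eq, hx]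
            linarith
          have hfin : ∫⁻ z in F.mkQ ⁻¹' D ∩ {z : E | s * ‖F.mkQ z‖ < t * ‖z‖},
              ENNReal.ofReal (Real.exp (-t * ‖z‖)) ∂μ < ⊤ := by
            refine lt_of_le_of_lt (le_trans (setLIntegral_mono'
              (((hD.1.preimage (mkQ_continuous F)).inter hSopen).measurableSet)
              fun z hz => ENNReal.ofReal_le_ofReal (Real.exp_le_exp.2 ?_))
              (lintegral_mono_set Set.inter_subset_left)) hDfin
            have h5 := hz.2
            rw [Set.mem_setOf_eq] at h5
            linarith
          exact ereal_mul_le_mul_left hnx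
            (le_trans (dirExp_le hCcone hxC) (coneExponent_le_of_finite hfin))
        have harith : ((‖x‖ : ℝ) : EReal) * (((‖y‖ * s) / ‖x‖ : ℝ) : EReal)
            = ((‖y‖ : ℝ) : EReal) * ((s : ℝ) : EReal) := by
          rw [← EReal.coe_mul, ← EReal.coe_mul]
          congr 1
          field_simp
        rw [harith] at key
        exact key


end DirectionalCounting
end
end
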